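/- arXiv:2112.03797 — 5 statements merged into one kernel-verified Lean document; each statement's English description precedes it below -/
import Mathlib

section
/- Let k be a field of characteristic not 2 and (V,Q) a regular quadratic space over k of dimension 5 with orthogonal basis {e₁,...,e₅}. Let c = e₁e₂e₃e₄e₅ in the Clifford algebra. Then the subspace U of the even Clifford algebra Cliff₀(V) fixed by the canonical anti-involution equals k ⊕ c·V; in particular it has dimension 6. -/
open CliffordAlgebra

namespace QuinaryAux

variable {k V : Type*} [Field k] [AddCommGroup V] [Module k V]
variable (Q : QuadraticForm k V) (e : Module.Basis (Fin 5) k V)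

/-- product of the images of basis vectors along a list of indices -/
noncomputable def mu (L : List (Fin 5)) : CliffordAlgebra Q :=
  (L.map fun i => ι Q (e i)).prod

variable {Q e}

lemma mu_nil : mu Q e [] = 1 := rfl

lemma mu_cons (i : Fin 5) (L : List (Fin 5)) :
    mu Q e (i :: L) = ι Q (e i) * mu Q e L := by simp [mu]

lemma mu_append (L M : List (Fin 5)) : mu Q e (L ++ M) = mu Q e L * mu Q e M := by
  simp [mu]

lemma mu_singleton (i : Fin 5) : mu Q e [i] = ι Q (e i) := by simp [mu]

variable (horth : ∀ i j : Fin 5, i ≠ j → QuadraticMap.polar Q (e i) (e j) = 0)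

include horth in
lemma swap {i j : Fin 5} (h : i ≠ j) :
    ι Q (e i) * ι Q (e j) = -(ι Q (e j) * ι Q (e i)) := by
  have h2 := ι_mul_ι_add_swap (Q := Q) (e i) (e j)
  rw [horth i j h, map_zero] at h2
  exact eq_neg_of_add_eq_zero_left h2

include horth in
lemma mu_middle_swap (A X : List (Fin 5)) {i b : Fin 5} (h : i ≠ b) :
    mu Q e (A ++ i :: b :: X) = -mu Q e (A ++ b :: i :: X) := by
  rw [mu_append, mu_append, mu_cons, mu_cons, mu_cons, mu_cons,
    ← mul_assoc (ι Q (e i)), swap horth h]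
  simp only [neg_mul, mul_neg, mul_assoc]

lemma mu_middle_sq (A X : List (Fin 5)) (i : Fin 5) :
    mu Q e (A ++ i :: i :: X) = Q (e i) • mu Q e (A ++ X) := by
  rw [mu_append, mu_append, mu_cons, mu_cons, ← mul_assoc (ι Q (e i)), ι_sq_scalar,
    ← Algebra.smul_def, mul_smul_comm]

include horth in
lemma mu_dup (hQ : ∀ i, Q (e i) ≠ 0) :
    ∀ (B A C : List (Fin 5)) (i : Fin 5),
    ∃ s : k, s ≠ 0 ∧ ∃ L'' : List (Fin 5), L''.Perm (A ++ (B ++ C)) ∧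
      mu Q e (A ++ i :: (B ++ i :: C)) = s • mu Q e L'' := by
  intro B
  induction B with
  | nil =>
    intro A C i
    exact ⟨Q (e i), hQ i, A ++ C, List.Perm.refl _, mu_middle_sq A C i⟩
  | cons b B' ih =>
    intro A C i
    by_cases hbi : b = i
    · subst hbi
      refine ⟨Q (e b), hQ b, A ++ (B' ++ b :: C), ?_, ?_⟩
      · exact List.Perm.append_left A List.perm_middle
      · have h3 : A ++ b :: (b :: B' ++ b :: C) = A ++ b :: b :: (B' ++ b :: C) := by simp
        rw [h3, mu_middle_sq A (B' ++ b :: C) b]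
    · obtain ⟨s, hs, L'', hperm, hmu⟩ := ih (A ++ [b]) C i
      refine ⟨-s, neg_ne_zero.mpr hs, L'', ?_, ?_⟩
      · refine hperm.trans ?_
        have h2 : (A ++ [b]) ++ (B' ++ C) = A ++ (b :: B' ++ C) := by simp
        rw [h2]
      · have h1 : mu Q e (A ++ i :: (b :: B' ++ i :: C))
            = -mu Q e ((A ++ [b]) ++ i :: (B' ++ i :: C)) := by
          have := mu_middle_swap horth A (B' ++ i :: C) (fun h => hbi h.symm : i ≠ b)
          simpa using this
        rw [h1, hmu, neg_smul]

lemma not_nodup_decomp {α : Type*} : ∀ (L : List α), ¬L.Nodup →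
    ∃ (i : α) (A B C : List α), L = A ++ i :: (B ++ i :: C) := by
  intro L
  induction L with
  | nil => intro h; exact absurd List.nodup_nil h
  | cons x T ih =>
    intro h
    by_cases hx : x ∈ T
    · obtain ⟨B, C, rfl⟩ := List.append_of_mem hx
      exact ⟨x, [], B, C, rfl⟩
    · have hT : ¬T.Nodup := fun hT => h (List.nodup_cons.mpr ⟨hx, hT⟩)
      obtain ⟨i, A, B, C, rfl⟩ := ih hT
      exact ⟨i, x :: A, B, C, rfl⟩

include horth in
lemma mu_straighten (hQ : ∀ i, Q (e i) ≠ 0) :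
    ∀ (L : List (Fin 5)), ∃ s : k, s ≠ 0 ∧ ∃ L' : List (Fin 5), L'.Nodup ∧
      mu Q e L = s • mu Q e L' ∧ (∀ a, L.count a % 2 = L'.count a % 2) ∧
      L.length % 2 = L'.length % 2 := by
  suffices H : ∀ (n : ℕ) (L : List (Fin 5)), L.length ≤ n → ∃ s : k, s ≠ 0 ∧
      ∃ L' : List (Fin 5), L'.Nodup ∧
      mu Q e L = s • mu Q e L' ∧ (∀ a, L.count a % 2 = L'.count a % 2) ∧
      L.length % 2 = L'.length % 2 from fun L => H L.length L le_rfl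
  intro n
  induction n with
  | zero =>
    intro L hL
    have : L = [] := List.eq_nil_of_length_eq_zero (Nat.le_zero.mp hL)
    subst this
    exact ⟨1, one_ne_zero, [], List.nodup_nil, (one_smul _ _).symm, fun a => rfl, rfl⟩
  | succ n ih =>
    intro L hL
    by_cases hnd : L.Nodup
    · exact ⟨1, one_ne_zero, L, hnd, (one_smul _ _).symm, fun a => rfl, rfl⟩
    · obtain ⟨i, A, B, C, rfl⟩ := not_nodup_decomp _ hnd
      obtain ⟨s, hs, L'', hperm, hmu⟩ := mu_dup horth hQ B A C i
      have hlen2 : L''.length + 2 = (A ++ i :: (B ++ i :: C)).length := by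
        rw [hperm.length_eq]; simp; omega
      have hlen : L''.length ≤ n := by omega
      obtain ⟨s', hs', L', hnd', hmu', hcount', hlen'⟩ := ih L'' hlen
      refine ⟨s * s', mul_ne_zero hs hs', L', hnd', ?_, ?_, ?_⟩
      · rw [hmu, hmu', smul_smul]
      · intro a
        have h5 : L''.count a = (A ++ (B ++ C)).count a := hperm.count_eq a
        have h4 := hcount' a
        rw [h5] at h4
        simp only [List.count_append, List.count_cons] at h4 ⊢
        by_cases hai : a = i <;> simp [hai] at h4 ⊢ <;> omega
      · simp at hlen2 ⊢
        omega

include horth in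
lemma move {i : Fin 5} : ∀ (L : List (Fin 5)), i ∉ L →
    ι Q (e i) * mu Q e L = ((-1 : k) ^ L.length) • (mu Q e L * ι Q (e i)) := by
  intro L
  induction L with
  | nil => simp [mu_nil]
  | cons b T ih =>
    intro hmem
    have hib : i ≠ b := fun h => hmem (h ▸ List.mem_cons_self)
    have hiT : i ∉ T := fun h => hmem (List.mem_cons_of_mem b h)
    rw [mu_cons, ← mul_assoc, swap horth hib, neg_mul, mul_assoc, ih hiT]
    rw [mul_smul_comm]
    simp only [List.length_cons, pow_succ, mul_neg_one, neg_smul, mul_assoc]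

include horth in
lemma move' {i : Fin 5} (L : List (Fin 5)) (h : i ∉ L) :
    mu Q e L * ι Q (e i) = ((-1 : k) ^ L.length) • (ι Q (e i) * mu Q e L) := by
  rw [move horth L h, smul_smul, ← pow_add, Even.neg_one_pow ⟨L.length, rfl⟩, one_smul]

include horth in
lemma mu_left_absorb {i : Fin 5} (A B : List (Fin 5)) (hA : i ∉ A) :
    ι Q (e i) * mu Q e (A ++ i :: B) = (((-1 : k) ^ A.length) * Q (e i)) • mu Q e (A ++ B) := by
  rw [mu_append, mu_cons, ← mul_assoc, move horth A hA, smul_mul_assoc, mul_assoc]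
  rw [show ι Q (e i) * (ι Q (e i) * mu Q e B) = Q (e i) • mu Q e B by
    rw [← mul_assoc, ι_sq_scalar, ← Algebra.smul_def]]
  rw [mul_smul_comm, smul_smul, mu_append]

include horth in
lemma mu_right_absorb {i : Fin 5} (A B : List (Fin 5)) (hB : i ∉ B) :
    mu Q e (A ++ i :: B) * ι Q (e i) = (((-1 : k) ^ B.length) * Q (e i)) • mu Q e (A ++ B) := by
  rw [mu_append, mu_cons, mul_assoc, mul_assoc, move' horth B hB, mul_smul_comm,
    mul_smul_comm]
  rw [show ι Q (e i) * (ι Q (e i) * mu Q e B) = Q (e i) • mu Q e B by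
    rw [← mul_assoc, ι_sq_scalar, ← Algebra.smul_def]]
  rw [mul_smul_comm, smul_smul, mu_append]

lemma reverse_mu (L : List (Fin 5)) :
    reverse (mu Q e L) = mu Q e L.reverse := by
  have h := reverse_prod_map_ι (Q := Q) (L.map fun i => e i)
  simpa [mu, List.map_map, List.map_reverse, Function.comp_def] using h

include horth in
lemma mu_reverse_sign : ∀ (L : List (Fin 5)), L.Nodup →
    mu Q e L.reverse = ((-1 : k) ^ (L.length.choose 2)) • mu Q e L := by
  intro L
  induction L with
  | nil => simp [mu_nil]
  | cons i T ih =>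
    intro hnd
    rw [List.nodup_cons] at hnd
    have h1 : (i :: T).reverse = T.reverse ++ [i] := by simp
    rw [h1, mu_append, mu_singleton, ih hnd.2, smul_mul_assoc,
      move' horth T hnd.1, mu_cons, smul_smul]
    congr 1
    rw [← pow_add]
    congr 1
    simp [List.length_cons, Nat.choose_succ_succ, Nat.choose_one_right]
    omega

include horth in
lemma c_comm_basis (i : Fin 5) :
    mu Q e [0,1,2,3,4] * ι Q (e i) = ι Q (e i) * mu Q e [0,1,2,3,4] := by
  have H : ∀ (A B : List (Fin 5)) (j : Fin 5), j ∉ A → j ∉ B →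
      (-1 : k) ^ A.length = (-1 : k) ^ B.length →
      mu Q e (A ++ j :: B) * ι Q (e j) = ι Q (e j) * mu Q e (A ++ j :: B) := by
    intro A B j hA hB hpar
    rw [mu_left_absorb horth A B hA, mu_right_absorb horth A B hB, hpar]
  fin_cases i
  · exact H [] [1,2,3,4] 0 (by decide) (by decide) (by norm_num)
  · exact H [0] [2,3,4] 1 (by decide) (by decide) (by norm_num)
  · exact H [0,1] [3,4] 2 (by decide) (by decide) (by norm_num)
  · exact H [0,1,2] [4] 3 (by decide) (by decide) (by norm_num)
  · exact H [0,1,2,3] [] 4 (by decide) (by decide) (by norm_num)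

include horth in
lemma c_comm (v : V) :
    mu Q e [0,1,2,3,4] * ι Q v = ι Q v * mu Q e [0,1,2,3,4] := by
  have hv : ι Q v = ∑ i, e.repr v i • ι Q (e i) := by
    conv_lhs => rw [← e.sum_repr v]
    rw [map_sum]
    simp
  rw [hv, Finset.sum_mul, Finset.mul_sum]
  refine Finset.sum_congr rfl fun i _ => ?_
  rw [smul_mul_assoc, mul_smul_comm, c_comm_basis horth i]

include horth in
lemma reverse_c : reverse (mu Q e [0,1,2,3,4]) = mu Q e [0,1,2,3,4] := by
  rw [reverse_mu]
  have h := mu_reverse_sign horth ([0,1,2,3,4] : List (Fin 5)) (by decide)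
  rw [show (([0,1,2,3,4] : List (Fin 5)).length.choose 2) = 10 from rfl] at h
  rw [h]
  norm_num

include horth in
lemma c_sq (hQ : ∀ i, Q (e i) ≠ 0) :
    ∃ s₀ : k, s₀ ≠ 0 ∧
      mu Q e [0,1,2,3,4] * mu Q e [0,1,2,3,4] = algebraMap k (CliffordAlgebra Q) s₀ := by
  obtain ⟨s, hs, L', hnd, hmu, hcount, -⟩ :=
    mu_straighten horth hQ ([0,1,2,3,4] ++ [0,1,2,3,4] : List (Fin 5))
  have hL' : L' = [] := by
    rw [List.eq_nil_iff_forall_not_mem]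
    intro a ha
    have h1 := hcount a
    have h2 : List.count a ([0,1,2,3,4] ++ [0,1,2,3,4] : List (Fin 5)) = 2 := by
      fin_cases a <;> decide
    have h3 := List.nodup_iff_count_le_one.mp hnd a
    have h4 : 1 ≤ List.count a L' := List.one_le_count_iff.mpr ha
    omega
  subst hL'
  refine ⟨s, hs, ?_⟩
  rw [← mu_append, hmu, mu_nil, Algebra.algebraMap_eq_smul_one]

include horth in
lemma c_mul_basis (hQ : ∀ i, Q (e i) ≠ 0) (l : Fin 5) :
    ∃ (s : k) (L' : List (Fin 5)), s ≠ 0 ∧ L'.Nodup ∧ L' ≠ [] ∧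
      mu Q e [0,1,2,3,4] * ι Q (e l) = s • mu Q e L' := by
  obtain ⟨s, hs, L', hnd, hmu, hcount, -⟩ :=
    mu_straighten horth hQ ([0,1,2,3,4] ++ [l] : List (Fin 5))
  refine ⟨s, L', hs, hnd, ?_, ?_⟩
  · obtain ⟨a, ha⟩ : ∃ a : Fin 5, a ≠ l := by
      by_cases h : l = 0
      · exact ⟨1, by rw [h]; decide⟩
      · exact ⟨0, fun h' => h h'.symm⟩
    have h1 := hcount a
    have h2 : List.count a ([0,1,2,3,4] ++ [l] : List (Fin 5)) = 1 := by
      rw [List.count_append]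
      have h3 : List.count a [l] = 0 := by
        simp [List.count_cons, ha, Ne.symm ha]
      have h4 : List.count a ([0,1,2,3,4] : List (Fin 5)) = 1 := by
        fin_cases a <;> decide
      omega
    intro hnil
    subst hnil
    rw [h2] at h1
    simpa using h1
  · rw [mu_append, mu_singleton] at hmu
    exact hmu

include horth in
lemma mu4_in_cV (hQ : ∀ i, Q (e i) ≠ 0) (L : List (Fin 5)) (hnd : L.Nodup)
    (hlen : L.length = 4) :
    ∃ (t : k) (l : Fin 5), mu Q e L = t • (mu Q e [0,1,2,3,4] * ι Q (e l)) := by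
  obtain ⟨l, hl⟩ : ∃ l : Fin 5, l ∉ L := by
    by_contra h
    push_neg at h
    have h1 : (Finset.univ : Finset (Fin 5)) ⊆ L.toFinset := fun a _ => by
      simpa using h a
    have h2 := Finset.card_le_card h1
    rw [List.toFinset_card_of_nodup hnd, hlen] at h2
    simp at h2
  have hmem : ∀ a : Fin 5, a ≠ l → a ∈ L := by
    intro a ha
    have hsub : L.toFinset ⊆ Finset.univ.erase l := by
      intro x hx
      refine Finset.mem_erase.mpr ⟨?_, Finset.mem_univ x⟩
      rintro rfl
      exact hl (List.mem_toFinset.mp hx)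
    have hcard : (Finset.univ.erase l).card = 4 := by
      rw [Finset.card_erase_of_mem (Finset.mem_univ l)]
      rfl
    have heq : L.toFinset = Finset.univ.erase l :=
      Finset.eq_of_subset_of_card_le hsub (by
        rw [hcard, List.toFinset_card_of_nodup hnd, hlen])
    have : a ∈ Finset.univ.erase l := Finset.mem_erase.mpr ⟨ha, Finset.mem_univ a⟩
    rw [← heq] at this
    exact List.mem_toFinset.mp this
  obtain ⟨s, hs, L'', hnd'', hmu, hcount, -⟩ :=
    mu_straighten horth hQ ([0,1,2,3,4] ++ L : List (Fin 5))
  have hcnt1 : ∀ a : Fin 5, List.count a ([0,1,2,3,4] : List (Fin 5)) = 1 := by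
    decide
  have hL'' : L'' = [l] := by
    have hmeml : l ∈ L'' := by
      have h1 := hcount l
      rw [List.count_append, hcnt1 l, List.count_eq_zero.mpr hl] at h1
      have := List.nodup_iff_count_le_one.mp hnd'' l
      rw [← List.one_le_count_iff]
      omega
    have honly : ∀ x ∈ L'', x = l := by
      intro x hx
      by_contra hxl
      have h1 := hcount x
      rw [List.count_append, hcnt1 x,
        List.count_eq_one_of_mem hnd (hmem x hxl)] at h1
      have h4 : 1 ≤ List.count x L'' := List.one_le_count_iff.mpr hx
      have := List.nodup_iff_count_le_one.mp hnd'' x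
      omega
    cases L'' with
    | nil => exact absurd hmeml List.not_mem_nil
    | cons x t =>
      have hx : x = l := honly x (List.mem_cons_self)
      subst hx
      have ht : t = [] := by
        rw [List.eq_nil_iff_forall_not_mem]
        intro y hy
        have : y = x := honly y (List.mem_cons_of_mem x hy)
        subst this
        exact (List.nodup_cons.mp hnd'').1 hy
      rw [ht]
  subst hL''
  obtain ⟨s₀, hs₀, hsq⟩ := c_sq horth hQ
  rw [mu_append, mu_singleton] at hmu
  have h5 : mu Q e [0,1,2,3,4] * (mu Q e [0,1,2,3,4] * mu Q e L)
      = s • (mu Q e [0,1,2,3,4] * ι Q (e l)) := by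
    rw [hmu, mul_smul_comm]
  rw [← mul_assoc, hsq, ← Algebra.smul_def] at h5
  refine ⟨s₀⁻¹ * s, l, ?_⟩
  have := congrArg (fun x => s₀⁻¹ • x) h5
  simpa [smul_smul, inv_mul_cancel₀ hs₀] using this

lemma contract_mu0 (d : Module.Dual k V) : ∀ (L : List (Fin 5)), (∀ i ∈ L, d (e i) = 0) →
    contractLeft (Q := (0 : QuadraticForm k V)) d (mu (0 : QuadraticForm k V) e L) = 0 := by
  intro L
  induction L with
  | nil =>
    intro _
    rw [mu_nil]
    exact CliffordAlgebra.contractLeft_one (Q := (0 : QuadraticForm k V)) d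
  | cons i T ih =>
    intro h
    rw [mu_cons, contractLeft_ι_mul, h i (List.mem_cons_self),
      ih fun j hj => h j (List.mem_cons_of_mem _ hj)]
    simp

lemma assoc_neg_apply [Invertible (2 : k)]
    (horth : ∀ i j : Fin 5, i ≠ j → QuadraticMap.polar Q (e i) (e j) = 0)
    {i j : Fin 5} (h : i ≠ j) :
    (QuadraticMap.associated (R := k) (-Q)) (e i) (e j) = 0 := by
  rw [show QuadraticMap.associated (R := k) (-Q) = QuadraticMap.associatedHom k (-Q) from rfl,
    QuadraticMap.associated_apply]
  have hp : (-Q) (e i + e j) - (-Q) (e i) - (-Q) (e j) = 0 := by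
    have h1 := horth i j h
    simp only [QuadraticMap.polar] at h1
    simp only [QuadraticMap.neg_apply]
    linear_combination -h1
  rw [hp, smul_zero]

lemma equivExterior_mu [Invertible (2 : k)]
    (horth : ∀ i j : Fin 5, i ≠ j → QuadraticMap.polar Q (e i) (e j) = 0) :
    ∀ (L : List (Fin 5)), L.Nodup →
    equivExterior Q (mu Q e L) = mu (0 : QuadraticForm k V) e L := by
  have hT : ∀ x : CliffordAlgebra Q, equivExterior Q x
      = changeForm (changeForm.associated_neg_proof (Q := Q)) x := fun _ => rfl
  intro L
  induction L with
  | nil =>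
    intro _
    rw [mu_nil, mu_nil, hT, changeForm_one]
  | cons i T ih =>
    intro hnd
    rw [List.nodup_cons] at hnd
    rw [mu_cons, mu_cons, hT, changeForm_ι_mul, ← hT, ih hnd.2]
    have hz : contractLeft (Q := (0 : QuadraticForm k V))
        ((QuadraticMap.associated (R := k) (-Q)) (e i))
        (mu (0 : QuadraticForm k V) e T) = 0 := by
      apply contract_mu0
      intro j hj
      exact assoc_neg_apply horth (fun h => hnd.1 (h ▸ hj))
    rw [hz, sub_zero]

lemma algebraMapInv_mu0 (L : List (Fin 5)) (h : L ≠ []) :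
    ExteriorAlgebra.algebraMapInv (mu (0 : QuadraticForm k V) e L) = 0 := by
  cases L with
  | nil => exact absurd rfl h
  | cons i T =>
    rw [mu_cons, map_mul]
    have : ExteriorAlgebra.algebraMapInv (R := k) (M := V)
        (ExteriorAlgebra.ι k (e i)) = 0 := by
      simp [ExteriorAlgebra.algebraMapInv]
    rw [show (ι (0 : QuadraticForm k V)) (e i) = ExteriorAlgebra.ι k (e i) from rfl, this,
      zero_mul]

variable (Q e) in
/-- the volume element -/
noncomputable def cC : CliffordAlgebra Q := mu Q e [0,1,2,3,4]

variable (Q e) in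
/-- the linear map whose range is `k ⊕ cV` -/
noncomputable def F : k × V →ₗ[k] CliffordAlgebra Q :=
  LinearMap.coprod (Algebra.linearMap k (CliffordAlgebra Q))
    ((LinearMap.mulLeft k (cC Q e)).comp (ι Q))

lemma cC_eq : cC Q e = mu Q e [0,1,2,3,4] := rfl

include horth in
lemma c_comm_basis_c (i : Fin 5) : cC Q e * ι Q (e i) = ι Q (e i) * cC Q e :=
  c_comm_basis horth i

include horth in
lemma c_comm_c (v : V) : cC Q e * ι Q v = ι Q v * cC Q e := c_comm horth v

include horth in
lemma reverse_c_c : reverse (cC Q e) = cC Q e := reverse_c horth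

lemma F_apply (a : k) (v : V) :
    F Q e (a, v) = algebraMap k (CliffordAlgebra Q) a + cC Q e * ι Q v := rfl

variable (Q e) in
/-- generators of the `-1` eigenspace of reversal -/
def Gm : Set (CliffordAlgebra Q) :=
  {x | ∃ L : List (Fin 5), L.Nodup ∧
    ((L.length = 2 ∧ x = mu Q e L) ∨ (L.length = 3 ∧ x = cC Q e * mu Q e L))}

variable (Q e) in
/-- the candidate even subalgebra decomposition -/
noncomputable def MM : Submodule k (CliffordAlgebra Q) :=
  LinearMap.range (F Q e) ⊔ Submodule.span k (Gm Q e)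

include horth in
lemma c_comm_mu : ∀ L : List (Fin 5), cC Q e * mu Q e L = mu Q e L * cC Q e := by
  intro L
  induction L with
  | nil => rw [mu_nil, one_mul, mul_one]
  | cons i T ih =>
    rw [mu_cons, ← mul_assoc, c_comm_basis_c horth i, mul_assoc, ih, ← mul_assoc]

include horth in
lemma good (hQ : ∀ i, Q (e i) ≠ 0) (L : List (Fin 5)) :
    (L.length % 2 = 0 → mu Q e L ∈ MM Q e) ∧
    (L.length % 2 = 1 → cC Q e * mu Q e L ∈ MM Q e) := by
  obtain ⟨s, hs, L', hnd, hmu, hcount, hlen⟩ := mu_straighten horth hQ L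
  have hle : L'.length ≤ 5 := by simpa using hnd.length_le_card
  constructor
  · intro hpar
    rw [hmu]
    refine Submodule.smul_mem _ _ ?_
    have hcases : L'.length = 0 ∨ L'.length = 2 ∨ L'.length = 4 := by omega
    rcases hcases with h0 | h2 | h4
    · rw [List.length_eq_zero_iff.mp h0, mu_nil]
      refine Submodule.mem_sup_left ⟨(1, 0), ?_⟩
      rw [F_apply]
      simp
    · exact Submodule.mem_sup_right (Submodule.subset_span ⟨L', hnd, Or.inl ⟨h2, rfl⟩⟩)
    · obtain ⟨t, l, hml⟩ := mu4_in_cV horth hQ L' hnd h4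
      rw [← cC_eq] at hml
      refine Submodule.mem_sup_left ⟨(0, t • e l), ?_⟩
      rw [F_apply, hml]
      simp [mul_smul_comm]
  · intro hpar
    rw [hmu, mul_smul_comm]
    refine Submodule.smul_mem _ _ ?_
    have hcases : L'.length = 1 ∨ L'.length = 3 ∨ L'.length = 5 := by omega
    rcases hcases with h1 | h3 | h5
    · obtain ⟨l, rfl⟩ := List.length_eq_one_iff.mp h1
      refine Submodule.mem_sup_left ⟨(0, e l), ?_⟩
      rw [F_apply, mu_singleton]
      simp
    · exact Submodule.mem_sup_right (Submodule.subset_span ⟨L', hnd, Or.inr ⟨h3, rfl⟩⟩)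
    · obtain ⟨s2, hs2, L2, hnd2, hmu2, hcount2, hlen2⟩ :=
        mu_straighten horth hQ ([0,1,2,3,4] ++ L')
      have hall : ∀ a : Fin 5, a ∈ L' := by
        intro a
        by_contra hmem
        have hsub : L'.toFinset ⊆ Finset.univ.erase a := by
          intro x hx
          refine Finset.mem_erase.mpr ⟨?_, Finset.mem_univ x⟩
          rintro rfl
          exact hmem (List.mem_toFinset.mp hx)
        have hcard := Finset.card_le_card hsub
        rw [List.toFinset_card_of_nodup hnd, h5,
          Finset.card_erase_of_mem (Finset.mem_univ a)] at hcard
        simp at hcard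
      have hL2 : L2 = [] := by
        rw [List.eq_nil_iff_forall_not_mem]
        intro a ha
        have hc := hcount2 a
        have hcnt : List.count a ([0,1,2,3,4] ++ L') = 2 := by
          rw [List.count_append,
            (by fin_cases a <;> decide :
              List.count a ([0,1,2,3,4] : List (Fin 5)) = 1),
            List.count_eq_one_of_mem hnd (hall a)]
        rw [hcnt] at hc
        have hc1 := List.nodup_iff_count_le_one.mp hnd2 a
        have hc2 := List.one_le_count_iff.mpr ha
        omega
      subst hL2
      rw [cC_eq, ← mu_append, hmu2, mu_nil]
      refine Submodule.mem_sup_left ⟨(s2, 0), ?_⟩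
      rw [F_apply]
      simp [Algebra.algebraMap_eq_smul_one]

include horth in
lemma iota_expand (w : V) : ι Q w = ∑ l, e.repr w l • ι Q (e l) := by
  conv_lhs => rw [← e.sum_repr w]
  rw [map_sum]
  simp

include horth in
lemma closure_basic (hQ : ∀ i, Q (e i) ≠ 0) (i j : Fin 5) (x : CliffordAlgebra Q)
    (hx : x ∈ MM Q e) : ι Q (e i) * (ι Q (e j) * x) ∈ MM Q e := by
  obtain ⟨p, hp, m, hm, rfl⟩ := Submodule.mem_sup.mp hx
  have hadd : ι Q (e i) * (ι Q (e j) * (p + m))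
      = ι Q (e i) * (ι Q (e j) * p) + ι Q (e i) * (ι Q (e j) * m) := by
    rw [mul_add, mul_add]
  rw [hadd]
  refine Submodule.add_mem _ ?_ ?_
  · obtain ⟨⟨a, v⟩, rfl⟩ := hp
    rw [F_apply, mul_add, mul_add]
    refine Submodule.add_mem _ ?_ ?_
    · have h1 : ι Q (e i) * (ι Q (e j) * algebraMap k (CliffordAlgebra Q) a)
          = a • mu Q e [i, j] := by
        simp [mu, Algebra.algebraMap_eq_smul_one, mul_smul_comm]
      rw [h1]
      exact Submodule.smul_mem _ _ ((good horth hQ [i, j]).1 (by simp))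
    · rw [iota_expand horth v, Finset.mul_sum, Finset.mul_sum, Finset.mul_sum]
      refine Submodule.sum_mem _ fun l _ => ?_
      have h2 : ι Q (e i) * (ι Q (e j) * (cC Q e * e.repr v l • ι Q (e l)))
          = e.repr v l • (cC Q e * mu Q e [i, j, l]) := by
        rw [mul_smul_comm, mul_smul_comm, mul_smul_comm]
        congr 1
        have ha : ι Q (e j) * (cC Q e * ι Q (e l))
            = cC Q e * (ι Q (e j) * ι Q (e l)) := by
          rw [← mul_assoc, ← c_comm_basis_c horth j, mul_assoc]
        rw [ha, ← mul_assoc, ← c_comm_basis_c horth i, mul_assoc]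
        congr 1
        simp [mu, mul_assoc]
      rw [h2]
      exact Submodule.smul_mem _ _ ((good horth hQ [i, j, l]).2 (by simp))
  · refine Submodule.span_induction ?_ ?_ ?_ ?_ hm
    · rintro y ⟨L, hnd, hy⟩
      rcases hy with ⟨h2, rfl⟩ | ⟨h3, rfl⟩
      · have h1 : ι Q (e i) * (ι Q (e j) * mu Q e L) = mu Q e (i :: j :: L) := by
          rw [mu_cons, mu_cons]
        rw [h1]
        exact (good horth hQ (i :: j :: L)).1 (by simp [h2])
      · have h1 : ι Q (e i) * (ι Q (e j) * (cC Q e * mu Q e L))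
            = cC Q e * mu Q e (i :: j :: L) := by
          have ha : ι Q (e j) * (cC Q e * mu Q e L)
              = cC Q e * (ι Q (e j) * mu Q e L) := by
            rw [← mul_assoc, ← c_comm_basis_c horth j, mul_assoc]
          rw [ha, ← mul_assoc, ← c_comm_basis_c horth i, mul_assoc, mu_cons, mu_cons]
        rw [h1]
        exact (good horth hQ (i :: j :: L)).2 (by simp [h3])
    · simp
    · intro y z _ _ hy hz
      have : ι Q (e i) * (ι Q (e j) * (y + z))
          = ι Q (e i) * (ι Q (e j) * y) + ι Q (e i) * (ι Q (e j) * z) := by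
        rw [mul_add, mul_add]
      rw [this]
      exact Submodule.add_mem _ hy hz
    · intro r y _ hy
      rw [mul_smul_comm, mul_smul_comm]
      exact Submodule.smul_mem _ _ hy

include horth in
lemma closure (hQ : ∀ i, Q (e i) ≠ 0) (m₁ m₂ : V) (x : CliffordAlgebra Q)
    (hx : x ∈ MM Q e) : ι Q m₁ * ι Q m₂ * x ∈ MM Q e := by
  rw [mul_assoc, iota_expand horth m₁, Finset.sum_mul]
  refine Submodule.sum_mem _ fun i _ => ?_
  rw [smul_mul_assoc]
  refine Submodule.smul_mem _ _ ?_
  rw [iota_expand horth m₂, Finset.sum_mul, Finset.mul_sum]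
  refine Submodule.sum_mem _ fun j _ => ?_
  rw [smul_mul_assoc, mul_smul_comm]
  exact Submodule.smul_mem _ _ (closure_basic horth hQ i j x hx)

include horth in
lemma even_sub (hQ : ∀ i, Q (e i) ≠ 0) (x : CliffordAlgebra Q)
    (hx : x ∈ evenOdd Q 0) : x ∈ MM Q e := by
  induction x, hx using even_induction with
  | algebraMap r =>
    refine Submodule.mem_sup_left ⟨(r, 0), ?_⟩
    rw [F_apply]
    simp
  | add x y hx hy ihx ihy => exact Submodule.add_mem _ ihx ihy
  | ι_mul_ι_mul m₁ m₂ x hx ih => exact closure horth hQ m₁ m₂ x ih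

include horth in
lemma reverse_F (y : CliffordAlgebra Q) (hy : y ∈ LinearMap.range (F Q e)) :
    reverse y = y := by
  obtain ⟨⟨a, v⟩, rfl⟩ := hy
  rw [F_apply, map_add]
  congr 1
  · exact reverse.commutes a
  · rw [reverse.map_mul, reverse_ι, reverse_c_c horth, c_comm_c horth]

include horth in
lemma reverse_Gm (y : CliffordAlgebra Q) (hy : y ∈ Submodule.span k (Gm Q e)) :
    reverse y = -y := by
  refine Submodule.span_induction ?_ ?_ ?_ ?_ hy
  · rintro z ⟨L, hnd, hz⟩
    rcases hz with ⟨h2, rfl⟩ | ⟨h3, rfl⟩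
    · rw [reverse_mu, mu_reverse_sign horth L hnd, h2]
      norm_num
    · rw [reverse.map_mul, reverse_mu, mu_reverse_sign horth L hnd, h3,
        reverse_c_c horth]
      rw [smul_mul_assoc, ← c_comm_mu horth L]
      norm_num
  · simp
  · intro y z _ _ hy hz
    rw [map_add, hy, hz, neg_add]
  · intro r y _ hy
    rw [map_smul, hy, smul_neg]

end QuinaryAux

open QuinaryAux CliffordAlgebra in
/-- Let `k` be a field of characteristic not 2 and `(V,Q)` a regular
quadratic space over `k` of dimension 5 with orthogonal basis `e₀,…,e₄`.  Let
`c = e₀e₁e₂e₃e₄` in the Clifford algebra.  Then the subspace `U` of the even Clifford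
algebra fixed by the canonical anti-involution (reversal) equals `k ⊕ c·V`;
in particular it has dimension 6. -/
theorem quinary_even_clifford_fixed_points
    {k V : Type*} [Field k] [AddCommGroup V] [Module k V]
    (hchar : (2 : k) ≠ 0)
    (Q : QuadraticForm k V)
    (hreg : ∀ x : V, (∀ y : V, QuadraticMap.polar Q x y = 0) → x = 0)
    (e : Module.Basis (Fin 5) k V)
    (horth : ∀ i j : Fin 5, i ≠ j → QuadraticMap.polar Q (e i) (e j) = 0)
    (c : CliffordAlgebra Q)
    (hc : c = CliffordAlgebra.ι Q (e 0) * CliffordAlgebra.ι Q (e 1) *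
        CliffordAlgebra.ι Q (e 2) * CliffordAlgebra.ι Q (e 3) * CliffordAlgebra.ι Q (e 4)) :
    {x : CliffordAlgebra Q | x ∈ CliffordAlgebra.evenOdd Q 0 ∧ CliffordAlgebra.reverse x = x}
      = {y : CliffordAlgebra Q | ∃ (a : k) (v : V),
          y = algebraMap k (CliffordAlgebra Q) a + c * CliffordAlgebra.ι Q v}
    ∧ Module.finrank k (Submodule.span k
        {x : CliffordAlgebra Q | x ∈ CliffordAlgebra.evenOdd Q 0 ∧
          CliffordAlgebra.reverse x = x}) = 6 := by
  letI : Invertible (2 : k) := invertibleOfNonzero hchar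
  have hQ : ∀ i, Q (e i) ≠ 0 := by
    intro i h0
    refine e.ne_zero i (hreg (e i) ?_)
    intro y
    have hy : y = ∑ j, e.repr y j • e j := (e.sum_repr y).symm
    have h1 : QuadraticMap.polar Q (e i) y = (QuadraticMap.polarBilin Q (e i)) y := rfl
    rw [h1, hy, map_sum]
    refine Finset.sum_eq_zero fun j _ => ?_
    rw [map_smul]
    by_cases hij : i = j
    · subst hij
      rw [show (QuadraticMap.polarBilin Q (e i)) (e i)
          = QuadraticMap.polar Q (e i) (e i) from rfl, QuadraticMap.polar_self, h0]
      simp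
    · rw [show (QuadraticMap.polarBilin Q (e i)) (e j)
          = QuadraticMap.polar Q (e i) (e j) from rfl, horth i j hij]
      simp
  have hc' : c = cC Q e := by
    rw [hc, cC_eq]
    simp [mu, mul_assoc]
  have hset : {x : CliffordAlgebra Q | x ∈ CliffordAlgebra.evenOdd Q 0 ∧
        CliffordAlgebra.reverse x = x}
      = {y : CliffordAlgebra Q | ∃ (a : k) (v : V),
          y = algebraMap k (CliffordAlgebra Q) a + c * CliffordAlgebra.ι Q v} := by
    ext x
    constructor
    · rintro ⟨hev, hrev⟩
      have hx : x ∈ MM Q e := even_sub horth hQ x hev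
      obtain ⟨p, hp, m, hm, rfl⟩ := Submodule.mem_sup.mp hx
      have h1 : reverse (p + m) = p - m := by
        rw [map_add, reverse_F horth p hp, reverse_Gm horth m hm, sub_eq_add_neg]
      have h2 : p + m = p - m := hrev.symm.trans h1
      rw [sub_eq_add_neg] at h2
      have hmeq : m = -m := add_left_cancel h2
      have h3 : (2 : k) • m = 0 := by
        rw [two_smul]
        nth_rewrite 2 [hmeq]
        exact add_neg_cancel m
      have hm0 : m = 0 := (smul_eq_zero.mp h3).resolve_left hchar
      rw [hm0, add_zero]
      obtain ⟨⟨a, v⟩, rfl⟩ := hp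
      exact ⟨a, v, by rw [F_apply, hc']⟩
    · rintro ⟨a, v, rfl⟩
      constructor
      · refine Submodule.add_mem _ (SetLike.algebraMap_mem_graded _ a) ?_
        rw [hc]
        have hassoc : ι Q (e 0) * ι Q (e 1) * ι Q (e 2) * ι Q (e 3) * ι Q (e 4) * ι Q v
            = (ι Q (e 0) * ι Q (e 1)) *
              ((ι Q (e 2) * ι Q (e 3)) * (ι Q (e 4) * ι Q v)) := by
          simp only [mul_assoc]
        rw [hassoc]
        exact zero_add (0 : ZMod 2) ▸ SetLike.mul_mem_graded
          (ι_mul_ι_mem_evenOdd_zero Q _ _)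
          (zero_add (0 : ZMod 2) ▸ SetLike.mul_mem_graded
            (ι_mul_ι_mem_evenOdd_zero Q _ _) (ι_mul_ι_mem_evenOdd_zero Q _ _))
      · have hmem : algebraMap k (CliffordAlgebra Q) a + c * ι Q v
            ∈ LinearMap.range (F Q e) := ⟨(a, v), by rw [F_apply, hc']⟩
        exact reverse_F horth _ hmem
  refine ⟨hset, ?_⟩
  rw [hset]
  have hKset : {y : CliffordAlgebra Q | ∃ (a : k) (v : V),
        y = algebraMap k (CliffordAlgebra Q) a + c * CliffordAlgebra.ι Q v}
      = (LinearMap.range (F Q e) : Set (CliffordAlgebra Q)) := by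
    ext y
    simp only [Set.mem_setOf_eq, SetLike.mem_coe, LinearMap.mem_range]
    constructor
    · rintro ⟨a, v, rfl⟩
      exact ⟨(a, v), by rw [F_apply, hc']⟩
    · rintro ⟨⟨a, v⟩, rfl⟩
      exact ⟨a, v, by rw [F_apply, hc']⟩
  rw [hKset, Submodule.span_eq]
  haveI : FiniteDimensional k V := Module.Finite.of_basis e
  obtain ⟨s₀, hs₀, hsq⟩ := c_sq horth hQ
  have hinj : Function.Injective (F Q e) := by
    rw [← LinearMap.ker_eq_bot, Submodule.eq_bot_iff]
    rintro ⟨a, v⟩ hav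
    rw [LinearMap.mem_ker, F_apply] at hav
    have hterm : ∀ l, ExteriorAlgebra.algebraMapInv
        (equivExterior Q (cC Q e * ι Q (e l))) = 0 := by
      intro l
      obtain ⟨s, L', hs, hnd, hne, hmu⟩ := c_mul_basis horth hQ l
      rw [cC_eq, hmu, map_smul, equivExterior_mu horth L' hnd, map_smul,
        algebraMapInv_mu0 L' hne, smul_zero]
    have hc2 : ExteriorAlgebra.algebraMapInv (equivExterior Q (cC Q e * ι Q v)) = 0 := by
      rw [iota_expand horth v, Finset.mul_sum, map_sum, map_sum]
      refine Finset.sum_eq_zero fun l _ => ?_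
      rw [mul_smul_comm, map_smul, map_smul, hterm l, smul_zero]
    have ha : a = 0 := by
      have h1 := congrArg (fun z => ExteriorAlgebra.algebraMapInv (equivExterior Q z)) hav
      simp only [map_add, map_zero] at h1
      rw [hc2, add_zero] at h1
      rwa [show equivExterior Q (algebraMap k (CliffordAlgebra Q) a)
          = algebraMap k _ a from changeForm_algebraMap (changeForm.associated_neg_proof (Q := Q)) a,
        show ExteriorAlgebra.algebraMapInv (algebraMap k (ExteriorAlgebra k V) a) = a from
          ExteriorAlgebra.algebraMap_leftInverse V a] at h1
    have h3 : cC Q e * ι Q v = 0 := by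
      rw [ha, map_zero, zero_add] at hav
      exact hav
    have hv0 : ι Q v = 0 := by
      have h4 : cC Q e * (cC Q e * ι Q v) = 0 := by rw [h3, mul_zero]
      rw [← mul_assoc, cC_eq, hsq, ← Algebra.smul_def] at h4
      exact (smul_eq_zero.mp h4).resolve_left hs₀
    have hv : v = 0 := by
      have h5 := congrArg (equivExterior Q) hv0
      rw [map_zero] at h5
      rw [show equivExterior Q (ι Q v) = ExteriorAlgebra.ι k v from changeForm_ι (changeForm.associated_neg_proof (Q := Q)) v] at h5
      have h6 : ExteriorAlgebra.ι k v = ExteriorAlgebra.ι k (0 : V) := by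
        rw [h5, map_zero]
      exact (ExteriorAlgebra.ι_inj k v 0).mp h6
    show (a, v) = 0
    rw [Prod.mk_eq_zero]
    exact ⟨ha, hv⟩
  rw [LinearMap.finrank_range_of_inj hinj, Module.finrank_prod, Module.finrank_self,
    Module.finrank_eq_card_basis e]
  rfl
end

section
/- Let R ⊂ M₄(ℚ_p) be the order consisting of matrices with entries (m_{ij}) such that m_{ij} ∈ ℤ_p except m_{12}, m_{32} ∈ pⁿℤ_p, m_{24} ∈ p^{−n}ℤ_p, and m_{41}, m_{42}, m_{43} ∈ pⁿℤ_p. Then the maximal orders of M₄(ℚ_p) containing R are exactly α_m⁻¹ M₄(ℤ_p) α_m for 0 ≤ m ≤ n, where α_m = diag(1, p^m, 1, p^{m−n}). -/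
open scoped Matrix

variable (p : ℕ) [Fact p.Prime] (n : ℕ)

/-- Exponent pattern of the paramodular order of level `pⁿ`: entry `(i,j)` is required
to lie in `p^(paraExp n i j)·ℤ_p`. -/
def paraExp (i j : Fin 4) : ℤ :=
  if (i = 0 ∧ j = 1) ∨ (i = 2 ∧ j = 1) ∨ (i = 3 ∧ j = 0) ∨ (i = 3 ∧ j = 1) ∨
      (i = 3 ∧ j = 2) then (n : ℤ)
  else if i = 1 ∧ j = 3 then -(n : ℤ)
  else 0

/-- The paramodular order `R` of level `pⁿ` in `M₄(ℚ_p)`, as a set (`x ∈ p^e ℤ_p` is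
expressed as `‖x‖ ≤ p^(-e)`). -/
def paraOrder : Set (Matrix (Fin 4) (Fin 4) ℚ_[p]) :=
  {m | ∀ i j : Fin 4, ‖m i j‖ ≤ (p : ℝ) ^ (-(paraExp n i j))}

/-- An order in `M₄(ℚ_p)`: a subring which is a finitely generated `ℤ_p`-lattice
spanning `M₄(ℚ_p)` over `ℚ_p`. -/
def IsOrder (O : Subring (Matrix (Fin 4) (Fin 4) ℚ_[p])) : Prop :=
  (∀ (c : ℤ_[p]) (x : Matrix (Fin 4) (Fin 4) ℚ_[p]), x ∈ O → c • x ∈ O)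
  ∧ (∃ S : Finset (Matrix (Fin 4) (Fin 4) ℚ_[p]), (∀ x ∈ S, x ∈ O) ∧
      ∀ x ∈ O, x ∈ Submodule.span ℤ_[p] (↑S : Set (Matrix (Fin 4) (Fin 4) ℚ_[p])))
  ∧ Submodule.span ℚ_[p] (↑O : Set (Matrix (Fin 4) (Fin 4) ℚ_[p])) = ⊤

/-- A maximal order in `M₄(ℚ_p)`. -/
def IsMaximalOrder (O : Subring (Matrix (Fin 4) (Fin 4) ℚ_[p])) : Prop :=
  IsOrder p O ∧ ∀ O' : Subring (Matrix (Fin 4) (Fin 4) ℚ_[p]),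
    IsOrder p O' → O ≤ O' → O' = O

/-- `α_m = diag(1, p^m, 1, p^(m−n))`. -/
noncomputable def alphaMat (m : ℕ) : Matrix (Fin 4) (Fin 4) ℚ_[p] :=
  Matrix.diagonal ![1, (p : ℚ_[p]) ^ (m : ℤ), 1, (p : ℚ_[p]) ^ ((m : ℤ) - (n : ℤ))]

open Matrix
lemma pR1 : (1:ℝ) < p := by exact_mod_cast (Fact.out : p.Prime).one_lt
lemma pR0 (e : ℤ) : (0:ℝ) < (p:ℝ) ^ e :=
  zpow_pos (by exact_mod_cast (Fact.out : p.Prime).pos) e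
lemma std_apply (i j a b : Fin 4) (c : ℚ_[p]) :
    Matrix.single i j c a b = if a = i ∧ b = j then c else 0 := by
  simp [Matrix.single, and_comm, eq_comm]

/-- the exponent vector for the lattice index `m` -/
def ev (m : ℕ) : Fin 4 → ℤ := ![0, (m:ℤ), 0, (m:ℤ) - (n:ℤ)]

/-- the candidate maximal order, as a set -/
def Tset (m : ℕ) : Set (Matrix (Fin 4) (Fin 4) ℚ_[p]) :=
  {x | ∀ i j, ‖x i j‖ ≤ (p:ℝ) ^ (ev n m i - ev n m j)}

lemma std_mem_Tset {m : ℕ} {i j : Fin 4} {c : ℚ_[p]}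
    (h : ‖c‖ ≤ (p:ℝ) ^ (ev n m i - ev n m j)) :
    Matrix.single i j c ∈ Tset p n m := by
  intro a b
  rw [std_apply]
  split_ifs with hh
  · rcases hh with ⟨rfl, rfl⟩; exact h
  · simpa using (pR0 p _).le

lemma pnorm_sum4 (f : Fin 4 → ℚ_[p]) (B : ℝ) (h : ∀ k, ‖f k‖ ≤ B) :
    ‖∑ k, f k‖ ≤ B := by
  rw [Fin.sum_univ_four]
  exact le_trans (Padic.nonarchimedean _ _) (max_le (le_trans (Padic.nonarchimedean _ _) (max_le (le_trans (Padic.nonarchimedean _ _) (max_le (h 0) (h 1))) (h 2))) (h 3))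

/-- `Tset` as a subring -/
noncomputable def Tring (m : ℕ) : Subring (Matrix (Fin 4) (Fin 4) ℚ_[p]) where
  carrier := Tset p n m
  zero_mem' := by intro i j; simpa using (pR0 p _).le
  one_mem' := by
    intro i j
    rw [Matrix.one_apply]
    split_ifs with h
    · subst h; simp
    · simpa using (pR0 p _).le
  add_mem' := by
    intro a b ha hb i j
    exact le_trans (Padic.nonarchimedean _ _) (max_le (ha i j) (hb i j))
  neg_mem' := by intro a ha i j; simpa using ha i j
  mul_mem' := by
    intro a b ha hb i j
    rw [Matrix.mul_apply]
    apply pnorm_sum4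
    intro k
    rw [norm_mul]
    calc ‖a i k‖ * ‖b k j‖ ≤ (p:ℝ) ^ (ev n m i - ev n m k) * (p:ℝ) ^ (ev n m k - ev n m j) :=
          mul_le_mul (ha i k) (hb k j) (norm_nonneg _) (pR0 p _).le
      _ = (p:ℝ) ^ (ev n m i - ev n m j) := by
          rw [← zpow_add₀ (by exact_mod_cast (Fact.out : p.Prime).ne_zero : (p:ℝ) ≠ 0)]; ring_nf

lemma pQ0 (e : ℤ) : ((p:ℚ_[p]) ^ e) ≠ 0 :=
  zpow_ne_zero _ (by exact_mod_cast (Fact.out : p.Prime).ne_zero)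

lemma psmul_norm_le (c : ℤ_[p]) (q : ℚ_[p]) : ‖c • q‖ ≤ ‖q‖ := by
  have : c • q = (↑c : ℚ_[p]) * q := rfl
  rw [this, norm_mul]
  calc ‖(↑c:ℚ_[p])‖ * ‖q‖ ≤ 1 * ‖q‖ :=
        mul_le_mul_of_nonneg_right (by exact_mod_cast c.norm_le_one) (norm_nonneg _)
    _ = ‖q‖ := one_mul _

/-- basis elements of Tring -/
noncomputable def tgen (m : ℕ) (ij : Fin 4 × Fin 4) : Matrix (Fin 4) (Fin 4) ℚ_[p] :=
  Matrix.single ij.1 ij.2 ((p:ℚ_[p]) ^ (ev n m ij.2 - ev n m ij.1))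

lemma tgen_mem (m : ℕ) (ij : Fin 4 × Fin 4) : tgen p n m ij ∈ Tset p n m := by
  apply std_mem_Tset
  rw [Padic.norm_p_zpow, neg_sub]

lemma decomp (m : ℕ) (x : Matrix (Fin 4) (Fin 4) ℚ_[p]) :
    x = ∑ ij : Fin 4 × Fin 4,
      (x ij.1 ij.2 * (p:ℚ_[p]) ^ (ev n m ij.1 - ev n m ij.2)) • tgen p n m ij := by
  conv_lhs => rw [Matrix.matrix_eq_sum_single x]
  rw [← Finset.sum_product', Finset.univ_product_univ]
  apply Finset.sum_congr rfl
  rintro ⟨i, j⟩ -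
  rw [tgen, Matrix.smul_single, smul_eq_mul, mul_assoc,
    ← zpow_add₀ (by exact_mod_cast (Fact.out : p.Prime).ne_zero : (p:ℚ_[p]) ≠ 0)]
  norm_num

lemma isOrder_Tring (m : ℕ) : IsOrder p (Tring p n m) := by
  classical
  refine ⟨?_, ?_, ?_⟩
  · intro c x hx i j
    exact le_trans (psmul_norm_le p c _) (hx i j)
  · refine ⟨Finset.image (tgen p n m) Finset.univ, ?_, ?_⟩
    · intro x hx
      simp only [Finset.mem_image] at hx
      obtain ⟨ij, -, rfl⟩ := hx
      exact tgen_mem p n m ij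
    · intro x hx
      rw [decomp p n m x]
      apply Submodule.sum_mem
      rintro ⟨i, j⟩ -
      have hcm : ‖x i j * (p:ℚ_[p]) ^ (ev n m i - ev n m j)‖ ≤ 1 := by
        rw [norm_mul, Padic.norm_p_zpow]
        calc ‖x i j‖ * (p:ℝ)^(-(ev n m i - ev n m j))
            ≤ (p:ℝ)^(ev n m i - ev n m j) * (p:ℝ)^(-(ev n m i - ev n m j)) :=
              mul_le_mul_of_nonneg_right (hx i j) (pR0 p _).le
          _ = 1 := by
              rw [← zpow_add₀ (by exact_mod_cast (Fact.out : p.Prime).ne_zero : (p:ℝ) ≠ 0)]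
              simp
      obtain ⟨c, hc⟩ : ∃ c : ℤ_[p], (x i j * (p:ℚ_[p]) ^ (ev n m i - ev n m j)) • tgen p n m (i, j)
          = c • tgen p n m (i, j) := ⟨⟨_, hcm⟩, rfl⟩
      rw [hc]
      refine Submodule.smul_mem _ _ (Submodule.subset_span ?_)
      simp only [Finset.coe_image, Set.mem_image, Finset.mem_coe, Finset.mem_univ]
      exact ⟨(i, j), trivial, rfl⟩
  · rw [eq_top_iff]
    intro x _
    rw [decomp p n m x]
    apply Submodule.sum_mem
    rintro ⟨i, j⟩ -
    exact Submodule.smul_mem _ _ (Submodule.subset_span (tgen_mem p n m (i,j)))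

lemma para_subset_Tset {m : ℕ} (hm : m ≤ n) : paraOrder p n ⊆ Tset p n m := by
  intro x hx i j
  refine le_trans (hx i j) (zpow_le_zpow_right₀ (pR1 p).le ?_)
  fin_cases i <;> fin_cases j <;> simp [paraExp, ev] <;> omega

lemma alphaMat_eq (m : ℕ) :
    alphaMat p n m = Matrix.diagonal (fun i => (p:ℚ_[p]) ^ (ev n m i)) := by
  have : (![1, (p:ℚ_[p])^(m:ℤ), 1, (p:ℚ_[p])^((m:ℤ)-(n:ℤ))]) = fun i => (p:ℚ_[p])^(ev n m i) := by
    funext i; fin_cases i <;> simp [ev]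
  rw [alphaMat, this]

lemma image_eq (m : ℕ) :
    (fun x => (alphaMat p n m)⁻¹ * x * alphaMat p n m) ''
        {x : Matrix (Fin 4) (Fin 4) ℚ_[p] | ∀ i j, ‖x i j‖ ≤ 1} = Tset p n m := by
  have hq : ((p:ℚ_[p]) ≠ 0) := by exact_mod_cast (Fact.out : p.Prime).ne_zero
  have hmulinv : Matrix.diagonal (fun i => (p:ℚ_[p]) ^ (-(ev n m i))) * alphaMat p n m = 1 := by
    rw [alphaMat_eq, Matrix.diagonal_mul_diagonal]
    have : (fun i => (p:ℚ_[p])^(-(ev n m i)) * (p:ℚ_[p])^(ev n m i)) = fun _ => (1:ℚ_[p]) := by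
      funext i; rw [← zpow_add₀ hq]; simp
    rw [this, Matrix.diagonal_one]
  have hinvmul : alphaMat p n m * Matrix.diagonal (fun i => (p:ℚ_[p]) ^ (-(ev n m i))) = 1 := by
    rw [alphaMat_eq, Matrix.diagonal_mul_diagonal]
    have : (fun i => (p:ℚ_[p])^(ev n m i) * (p:ℚ_[p])^(-(ev n m i))) = fun _ => (1:ℚ_[p]) := by
      funext i; rw [← zpow_add₀ hq]; simp
    rw [this, Matrix.diagonal_one]
  have hinv : (alphaMat p n m)⁻¹ = Matrix.diagonal (fun i => (p:ℚ_[p]) ^ (-(ev n m i))) :=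
    Matrix.inv_eq_left_inv hmulinv
  ext x
  constructor
  · rintro ⟨y, hy, rfl⟩ i j
    dsimp only
    rw [hinv, alphaMat_eq, Matrix.mul_diagonal, Matrix.diagonal_mul, norm_mul,
      norm_mul, Padic.norm_p_zpow, Padic.norm_p_zpow, neg_neg]
    calc (p:ℝ)^(ev n m i) * ‖y i j‖ * (p:ℝ)^(-(ev n m j))
        ≤ (p:ℝ)^(ev n m i) * 1 * (p:ℝ)^(-(ev n m j)) := by
          apply mul_le_mul_of_nonneg_right _ (pR0 p _).le
          exact mul_le_mul_of_nonneg_left (hy i j) (pR0 p _).le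
      _ = (p:ℝ)^(ev n m i - ev n m j) := by
          rw [mul_one, ← zpow_add₀ (by exact_mod_cast (Fact.out : p.Prime).ne_zero : (p:ℝ) ≠ 0)]
          ring_nf
  · intro hx
    refine ⟨alphaMat p n m * x * (alphaMat p n m)⁻¹, ?_, ?_⟩
    · intro i j
      rw [hinv, alphaMat_eq, Matrix.mul_diagonal, Matrix.diagonal_mul, norm_mul,
        norm_mul, Padic.norm_p_zpow, Padic.norm_p_zpow, neg_neg]
      calc (p:ℝ)^(-(ev n m i)) * ‖x i j‖ * (p:ℝ)^(ev n m j)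
          ≤ (p:ℝ)^(-(ev n m i)) * (p:ℝ)^(ev n m i - ev n m j) * (p:ℝ)^(ev n m j) := by
            apply mul_le_mul_of_nonneg_right _ (pR0 p _).le
            exact mul_le_mul_of_nonneg_left (hx i j) (pR0 p _).le
        _ = 1 := by
            rw [← zpow_add₀ (by exact_mod_cast (Fact.out : p.Prime).ne_zero : (p:ℝ) ≠ 0),
              ← zpow_add₀ (by exact_mod_cast (Fact.out : p.Prime).ne_zero : (p:ℝ) ≠ 0)]
            have : -(ev n m i) + (ev n m i - ev n m j) + ev n m j = 0 := by ring
            rw [this, zpow_zero]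
    · dsimp only
      rw [hinv]
      simp only [← mul_assoc]
      rw [hmulinv, one_mul, mul_assoc, hmulinv, mul_one]

lemma Tset_inj {m m' : ℕ} (h : Tset p n m ⊆ Tset p n m') : m = m' := by
  have h1 : Matrix.single (0:Fin 4) 1 ((p:ℚ_[p]) ^ (m:ℤ)) ∈ Tset p n m := by
    apply std_mem_Tset
    rw [Padic.norm_p_zpow]
    apply zpow_le_zpow_right₀ (pR1 p).le
    simp [ev]
  have h2 : Matrix.single (1:Fin 4) 0 ((p:ℚ_[p]) ^ (-(m:ℤ))) ∈ Tset p n m := by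
    apply std_mem_Tset
    rw [Padic.norm_p_zpow]
    apply zpow_le_zpow_right₀ (pR1 p).le
    simp [ev]
  have g1 := h h1 0 1
  have g2 := h h2 1 0
  simp only [std_apply, and_self, if_true, Padic.norm_p_zpow, neg_neg] at g1 g2
  have e1 := (zpow_le_zpow_iff_right₀ (pR1 p)).mp g1
  have e2 := (zpow_le_zpow_iff_right₀ (pR1 p)).mp g2
  simp [ev] at e1 e2
  omega

lemma extract (x : Matrix (Fin 4) (Fin 4) ℚ_[p]) (i j : Fin 4) :
    Matrix.single i i (1:ℚ_[p]) * x * Matrix.single j j 1 = Matrix.single i j (x i j) := by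
  ext a b
  simp only [Matrix.mul_apply, std_apply, ite_mul, mul_ite, one_mul, mul_one, zero_mul,
    mul_zero, Finset.sum_ite_eq, Finset.sum_ite_eq', Finset.mem_univ, if_true]
  by_cases ha : a = i <;> by_cases hb : b = j <;> simp [ha, hb]

lemma std_pow (i : Fin 4) (c : ℚ_[p]) (k : ℕ) :
    (Matrix.single i i c) ^ (k+1) = Matrix.single i i (c ^ (k+1)) := by
  induction k with
  | zero => simp
  | succ k ih => rw [pow_succ, ih, Matrix.single_mul_single_same, ← pow_succ]

lemma std_mem_para (i j : Fin 4) :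
    Matrix.single i j ((p:ℚ_[p]) ^ (paraExp n i j)) ∈ paraOrder p n := by
  intro a b
  rw [std_apply]
  split_ifs with h
  · rcases h with ⟨rfl, rfl⟩
    rw [Padic.norm_p_zpow]
  · simpa using (pR0 p (-(paraExp n a b))).le

lemma paraExp_diag (i : Fin 4) : paraExp n i i = 0 := by
  fin_cases i <;> simp [paraExp]

lemma std_one_mem_para (i : Fin 4) : Matrix.single i i (1:ℚ_[p]) ∈ paraOrder p n := by
  have := std_mem_para p n i i
  rwa [paraExp_diag, zpow_zero] at this

lemma shift {a : ℝ} {c d : ℤ} (h : a * (p:ℝ)^c ≤ (p:ℝ)^d) : a ≤ (p:ℝ)^(d - c) := by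
  have hc := pR0 p c
  have : a = a * (p:ℝ)^c * ((p:ℝ)^c)⁻¹ := by field_simp
  rw [this]
  calc a * (p:ℝ)^c * ((p:ℝ)^c)⁻¹ ≤ (p:ℝ)^d * ((p:ℝ)^c)⁻¹ :=
        mul_le_mul_of_nonneg_right h (by positivity)
    _ = (p:ℝ)^(d - c) := by
        rw [← _root_.zpow_neg, ← zpow_add₀ (by exact_mod_cast (Fact.out : p.Prime).ne_zero : (p:ℝ) ≠ 0)]
        ring_nf

lemma norm_std_entry (i j : Fin 4) (c : ℚ_[p]) : ‖Matrix.single i j c i j‖ = ‖c‖ := by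
  rw [std_apply, if_pos ⟨rfl, rfl⟩]

set_option maxHeartbeats 2000000 in
lemma key (O : Subring (Matrix (Fin 4) (Fin 4) ℚ_[p]))
    (hO : IsOrder p O) (hRO : paraOrder p n ⊆ ↑O) :
    ∃ m : ℕ, m ≤ n ∧ (↑O : Set (Matrix (Fin 4) (Fin 4) ℚ_[p])) ⊆ Tset p n m := by
  obtain ⟨-, ⟨S, hSO, hSspan⟩, -⟩ := hO
  set K : ℝ := 1 + ∑ s ∈ S, ∑ i, ∑ j, ‖s i j‖ with hKdef
  have hK1 : 1 ≤ K := le_add_of_nonneg_right (by positivity)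
  have hbound : ∀ x ∈ O, ∀ i j, ‖x i j‖ ≤ K := by
    suffices h : ∀ x ∈ Submodule.span ℤ_[p] (↑S : Set (Matrix (Fin 4) (Fin 4) ℚ_[p])),
        ∀ i j, ‖x i j‖ ≤ K by
      intro x hx i j; exact h x (hSspan x hx) i j
    intro x hx
    induction hx using Submodule.span_induction with
    | mem s hs =>
      intro i j
      rw [hKdef]
      have hs' : s ∈ S := hs
      have h1 : ‖s i j‖ ≤ ∑ j', ‖s i j'‖ :=
        Finset.single_le_sum (fun _ _ => norm_nonneg _) (Finset.mem_univ j)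
      have h2 : (∑ j', ‖s i j'‖) ≤ ∑ i', ∑ j', ‖s i' j'‖ :=
        Finset.single_le_sum (fun _ _ => Finset.sum_nonneg fun _ _ => norm_nonneg _)
          (Finset.mem_univ i)
      have h3 : (∑ i', ∑ j', ‖s i' j'‖) ≤ ∑ t ∈ S, ∑ i', ∑ j', ‖t i' j'‖ :=
        Finset.single_le_sum (f := fun t => ∑ i' : Fin 4, ∑ j' : Fin 4, ‖t i' j'‖)
          (fun _ _ => Finset.sum_nonneg fun _ _ => Finset.sum_nonneg fun _ _ => norm_nonneg _) hs'
      linarith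
    | zero => intro i j; simpa using le_trans zero_le_one hK1
    | add x y hx hy ihx ihy =>
      intro i j
      exact le_trans (Padic.nonarchimedean _ _) (max_le (ihx i j) (ihy i j))
    | smul c x hx ih =>
      intro i j
      exact le_trans (psmul_norm_le p c _) (ih i j)
  have hdiag : ∀ x ∈ O, ∀ i, ‖x i i‖ ≤ 1 := by
    intro x hx i
    by_contra hgt
    push_neg at hgt
    obtain ⟨k, hk⟩ := pow_unbounded_of_one_lt K hgt
    have hstd : Matrix.single i i (1:ℚ_[p]) ∈ O := hRO (std_one_mem_para p n i)
    have hmem : Matrix.single i i (x i i) ∈ O := by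
      have := O.mul_mem (O.mul_mem hstd hx) hstd
      rwa [extract] at this
    have hpow : Matrix.single i i ((x i i)^(k+1)) ∈ O := by
      rw [← std_pow]; exact pow_mem hmem (k+1)
    have hb := hbound _ hpow i i
    rw [norm_std_entry, norm_pow] at hb
    have h1 : K < ‖x i i‖ ^ (k+1) :=
      lt_of_lt_of_le hk (pow_le_pow_right₀ hgt.le (Nat.le_succ k))
    linarith
  have hextract : ∀ x ∈ O, ∀ i j, Matrix.single i j (x i j) ∈ O := by
    intro x hx i j
    have h1 : Matrix.single i i (1:ℚ_[p]) ∈ O := hRO (std_one_mem_para p n i)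
    have h2 : Matrix.single j j (1:ℚ_[p]) ∈ O := hRO (std_one_mem_para p n j)
    have := O.mul_mem (O.mul_mem h1 hx) h2
    rwa [extract] at this
  have hpair : ∀ x ∈ O, ∀ z ∈ O, ∀ i j, ‖x i j‖ * ‖z j i‖ ≤ 1 := by
    intro x hx z hz i j
    have h3 : Matrix.single i i (x i j * z j i) ∈ O := by
      have := O.mul_mem (hextract x hx i j) (hextract z hz j i)
      rwa [Matrix.single_mul_single_same] at this
    have := hdiag _ h3 i
    rwa [norm_std_entry, norm_mul] at this
  have hRmem : ∀ i j, Matrix.single i j ((p:ℚ_[p])^(paraExp n i j)) ∈ O :=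
    fun i j => hRO (std_mem_para p n i j)
  -- values of paraExp we need
  have e01 : paraExp n 0 1 = (n:ℤ) := by simp [paraExp]
  have e31 : paraExp n 3 1 = (n:ℤ) := by simp [paraExp]
  have e13 : paraExp n 1 3 = -(n:ℤ) := by simp [paraExp]
  have e10 : paraExp n 1 0 = 0 := by simp [paraExp]
  have e20 : paraExp n 2 0 = 0 := by simp [paraExp]
  have e02 : paraExp n 0 2 = 0 := by simp [paraExp]
  have m01 : Matrix.single 0 1 ((p:ℚ_[p])^(n:ℤ)) ∈ O := by have := hRmem 0 1; rwa [e01] at this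
  have m31 : Matrix.single 3 1 ((p:ℚ_[p])^(n:ℤ)) ∈ O := by have := hRmem 3 1; rwa [e31] at this
  have m13 : Matrix.single 1 3 ((p:ℚ_[p])^(-(n:ℤ))) ∈ O := by have := hRmem 1 3; rwa [e13] at this
  have m10 : Matrix.single 1 0 (1:ℚ_[p]) ∈ O := by
    have := hRmem 1 0; rwa [e10, zpow_zero] at this
  have m20 : Matrix.single 2 0 (1:ℚ_[p]) ∈ O := by
    have := hRmem 2 0; rwa [e20, zpow_zero] at this
  have m02 : Matrix.single 0 2 (1:ℚ_[p]) ∈ O := by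
    have := hRmem 0 2; rwa [e02, zpow_zero] at this
  -- least valuation at entry (0,1)
  have hPn : ∃ x, x ∈ O ∧ ‖x 0 1‖ = (p:ℝ)^(-(n:ℤ)) :=
    ⟨_, m01, by rw [norm_std_entry, Padic.norm_p_zpow]⟩
  have hbdd : ∃ b : ℤ, ∀ v, (∃ x, x ∈ O ∧ ‖x 0 1‖ = (p:ℝ)^(-v)) → b ≤ v := by
    obtain ⟨N, hN⟩ := pow_unbounded_of_one_lt K (pR1 p)
    refine ⟨-(N:ℤ), ?_⟩
    rintro v ⟨x, hx, hv⟩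
    have h1 : (p:ℝ)^(-v) ≤ K := hv ▸ hbound x hx 0 1
    have h2 : (p:ℝ)^(-v) < (p:ℝ)^((N:ℕ):ℤ) := by
      rw [zpow_natCast]; exact lt_of_le_of_lt h1 hN
    have := (zpow_lt_zpow_iff_right₀ (pR1 p)).mp h2
    omega
  obtain ⟨m₀, ⟨x₀, hx₀O, hx₀⟩, hmin⟩ := Int.exists_least_of_bdd hbdd ⟨(n:ℤ), hPn⟩
  have ub01 : ∀ x ∈ O, ‖x 0 1‖ ≤ (p:ℝ)^(-m₀) := by
    intro x hx
    by_cases h0 : x 0 1 = 0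
    · rw [h0, norm_zero]; exact (pR0 p _).le
    · have hval := Padic.norm_eq_zpow_neg_valuation h0
      have hmv := hmin _ ⟨x, hx, hval⟩
      rw [hval]
      exact zpow_le_zpow_right₀ (pR1 p).le (by omega)
  have hm0n : m₀ ≤ n := hmin _ hPn
  have hm00 : 0 ≤ m₀ := by
    have hp2 := hpair x₀ hx₀O _ m10 0 1
    rw [norm_std_entry, norm_one, mul_one, hx₀] at hp2
    have := (zpow_le_zpow_iff_right₀ (pR1 p)).mp (hp2.trans_eq (zpow_zero _).symm)
    omega
  -- derived upper bounds
  have B21 : ∀ x ∈ O, ‖x 2 1‖ ≤ (p:ℝ)^(-m₀) := by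
    intro x hx
    have hy : Matrix.single 0 1 ((1:ℚ_[p]) * x 2 1) ∈ O := by
      have := O.mul_mem m02 (hextract x hx 2 1)
      rwa [Matrix.single_mul_single_same] at this
    have := ub01 _ hy
    rwa [norm_std_entry, one_mul] at this
  have B03 : ∀ x ∈ O, ‖x 0 3‖ ≤ (p:ℝ)^((n:ℤ) - m₀) := by
    intro x hx
    have hy : Matrix.single 0 1 (x 0 3 * (p:ℚ_[p])^(n:ℤ)) ∈ O := by
      have := O.mul_mem (hextract x hx 0 3) m31
      rwa [Matrix.single_mul_single_same] at this
    have h1 := ub01 _ hy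
    rw [norm_std_entry, norm_mul, Padic.norm_p_zpow] at h1
    have := shift p h1
    rwa [show -m₀ - -(n:ℤ) = (n:ℤ) - m₀ by ring] at this
  have B23 : ∀ x ∈ O, ‖x 2 3‖ ≤ (p:ℝ)^((n:ℤ) - m₀) := by
    intro x hx
    have hy : Matrix.single 0 3 ((1:ℚ_[p]) * x 2 3) ∈ O := by
      have := O.mul_mem m02 (hextract x hx 2 3)
      rwa [Matrix.single_mul_single_same] at this
    have := B03 _ hy
    rwa [norm_std_entry, one_mul] at this
  -- witnesses with entries of maximal norm
  have z21mem : Matrix.single 2 1 ((1:ℚ_[p]) * x₀ 0 1) ∈ O := by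
    have := O.mul_mem m20 (hextract x₀ hx₀O 0 1)
    rwa [Matrix.single_mul_single_same] at this
  have z03mem : Matrix.single 0 3 (x₀ 0 1 * (p:ℚ_[p])^(-(n:ℤ))) ∈ O := by
    have := O.mul_mem (hextract x₀ hx₀O 0 1) m13
    rwa [Matrix.single_mul_single_same] at this
  have z23mem : Matrix.single 2 3 ((1:ℚ_[p]) * (x₀ 0 1 * (p:ℚ_[p])^(-(n:ℤ)))) ∈ O := by
    have := O.mul_mem m20 z03mem
    rwa [Matrix.single_mul_single_same] at this
  have nz03 : ‖x₀ 0 1 * (p:ℚ_[p])^(-(n:ℤ))‖ = (p:ℝ)^((n:ℤ) - m₀) := by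
    rw [norm_mul, Padic.norm_p_zpow, hx₀, neg_neg,
      ← zpow_add₀ (by exact_mod_cast (Fact.out : p.Prime).ne_zero : (p:ℝ) ≠ 0)]
    ring_nf
  -- conclusion
  refine ⟨m₀.toNat, by omega, ?_⟩
  have hev0 : ev n m₀.toNat 0 = 0 := by simp [ev]
  have hev1 : ev n m₀.toNat 1 = m₀ := by simp [ev]; omega
  have hev2 : ev n m₀.toNat 2 = 0 := by simp [ev]
  have hev3 : ev n m₀.toNat 3 = m₀ - n := by simp [ev]; omega
  intro x hx i j
  fin_cases i <;> fin_cases j <;> simp only [Fin.zero_eta, Fin.mk_one, Fin.reduceFinMk, id_eq]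
  · -- (0,0)
    rw [hev0]; simpa using hdiag x hx 0
  · -- (0,1)
    rw [hev0, hev1, zero_sub]; exact ub01 x hx
  · -- (0,2)
    rw [hev0, hev2, sub_zero, zpow_zero]
    have := hpair x hx _ m20 0 2
    rwa [norm_std_entry, norm_one, mul_one] at this
  · -- (0,3)
    rw [hev0, hev3, zero_sub, neg_sub]; exact B03 x hx
  · -- (1,0)
    rw [hev1, hev0, sub_zero]
    have h1 := hpair x hx x₀ hx₀O 1 0
    rw [hx₀] at h1
    rw [← zpow_zero (p:ℝ)] at h1
    have := shift p h1
    rwa [show (0:ℤ) - -m₀ = m₀ by ring] at this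
  · -- (1,1)
    rw [hev1, sub_self, zpow_zero]; exact hdiag x hx 1
  · -- (1,2)
    rw [hev1, hev2, sub_zero]
    have h1 := hpair x hx _ z21mem 1 2
    rw [norm_std_entry, one_mul, hx₀] at h1
    rw [← zpow_zero (p:ℝ)] at h1
    have := shift p h1
    rwa [show (0:ℤ) - -m₀ = m₀ by ring] at this
  · -- (1,3)
    rw [hev1, hev3, show m₀ - (m₀ - (n:ℤ)) = (n:ℤ) by ring]
    have h1 := hpair x hx _ m31 1 3
    rw [norm_std_entry, Padic.norm_p_zpow] at h1
    rw [← zpow_zero (p:ℝ)] at h1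
    have := shift p h1
    rwa [show (0:ℤ) - -(n:ℤ) = (n:ℤ) by ring] at this
  · -- (2,0)
    rw [hev2, hev0, sub_zero, zpow_zero]
    have := hpair x hx _ m02 2 0
    rwa [norm_std_entry, norm_one, mul_one] at this
  · -- (2,1)
    rw [hev2, hev1, zero_sub]; exact B21 x hx
  · -- (2,2)
    rw [hev2, sub_self, zpow_zero]; exact hdiag x hx 2
  · -- (2,3)
    rw [hev2, hev3, zero_sub, neg_sub]; exact B23 x hx
  · -- (3,0)
    rw [hev3, hev0, sub_zero]
    have h1 := hpair x hx _ z03mem 3 0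
    rw [norm_std_entry, nz03] at h1
    rw [← zpow_zero (p:ℝ)] at h1
    have := shift p h1
    rwa [show (0:ℤ) - ((n:ℤ) - m₀) = m₀ - n by ring] at this
  · -- (3,1)
    rw [hev3, hev1, show m₀ - (n:ℤ) - m₀ = -(n:ℤ) by ring]
    have h1 := hpair x hx _ m13 3 1
    rw [norm_std_entry, Padic.norm_p_zpow, neg_neg] at h1
    rw [← zpow_zero (p:ℝ)] at h1
    have := shift p h1
    rwa [show (0:ℤ) - (n:ℤ) = -(n:ℤ) by ring] at this
  · -- (3,2)
    rw [hev3, hev2, sub_zero]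
    have h1 := hpair x hx _ z23mem 3 2
    rw [norm_std_entry, one_mul, nz03] at h1
    rw [← zpow_zero (p:ℝ)] at h1
    have := shift p h1
    rwa [show (0:ℤ) - ((n:ℤ) - m₀) = m₀ - n by ring] at this
  · -- (3,3)
    rw [hev3, sub_self, zpow_zero]; exact hdiag x hx 3



/-- The maximal orders of `M₄(ℚ_p)` containing the paramodular order
`R` of level `pⁿ` are exactly `α_m⁻¹ M₄(ℤ_p) α_m` for `0 ≤ m ≤ n`. -/
theorem maximal_orders_containing_paramodular (O : Subring (Matrix (Fin 4) (Fin 4) ℚ_[p])) :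
    (IsMaximalOrder p O ∧ paraOrder p n ⊆ ↑O)
      ↔ ∃ m : ℕ, m ≤ n ∧ (↑O : Set (Matrix (Fin 4) (Fin 4) ℚ_[p]))
          = (fun x => (alphaMat p n m)⁻¹ * x * alphaMat p n m) ''
              {x : Matrix (Fin 4) (Fin 4) ℚ_[p] | ∀ i j, ‖x i j‖ ≤ 1} := by
  constructor
  · rintro ⟨⟨hOord, hOmax⟩, hRO⟩
    obtain ⟨m, hmn, hsub⟩ := key p n O hOord hRO
    refine ⟨m, hmn, ?_⟩
    have hle : O ≤ Tring p n m := hsub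
    have heq := hOmax (Tring p n m) (isOrder_Tring p n m) hle
    rw [image_eq p n m, ← heq]
    rfl
  · rintro ⟨m, hmn, hcar⟩
    rw [image_eq p n m] at hcar
    have hOT : O = Tring p n m := SetLike.ext' hcar
    refine ⟨⟨hOT ▸ isOrder_Tring p n m, ?_⟩, ?_⟩
    · intro O' hO' hle
      have hRO' : paraOrder p n ⊆ (↑O' : Set (Matrix (Fin 4) (Fin 4) ℚ_[p])) := by
        intro y hy
        have : y ∈ (↑O : Set (Matrix (Fin 4) (Fin 4) ℚ_[p])) := by
          rw [hcar]; exact para_subset_Tset p n hmn hy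
        exact hle this
      obtain ⟨m', hm'n, hsub'⟩ := key p n O' hO' hRO'
      have hTT : Tset p n m ⊆ Tset p n m' := by
        intro y hy
        have : y ∈ (↑O : Set (Matrix (Fin 4) (Fin 4) ℚ_[p])) := by rw [hcar]; exact hy
        exact hsub' (hle this)
      have hmm' : m = m' := Tset_inj p n hTT
      apply SetLike.ext'
      apply Set.Subset.antisymm
      · intro y hy
        rw [hcar, hmm']
        exact hsub' hy
      · exact hle
    · intro y hy
      rw [hcar]
      exact para_subset_Tset p n hmn hy
end

section
/- The normaliser in GL₄(ℚ_p) of the paramodular order R of level pⁿ, i.e. {g ∈ GL₄(ℚ_p) : g⁻¹Rg = R}, equals the union over μ ∈ {0,1} of p^ℤ · W_{pⁿ}^μ · R^×, where W_{pⁿ} = [[0,pⁿ,0,0],[1,0,0,0],[0,0,0,1],[0,0,pⁿ,0]]. -/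
open scoped Matrix

variable (p : ℕ) [Fact p.Prime] (n : ℕ)

/-- The Atkin-Lehner matrix `W_{pⁿ}`. -/
noncomputable def WMat : Matrix (Fin 4) (Fin 4) ℚ_[p] :=
  !![0, (p : ℚ_[p])^n, 0, 0; 1, 0, 0, 0; 0, 0, 0, 1; 0, 0, (p : ℚ_[p])^n, 0]

namespace Para
variable {p : ℕ} [Fact p.Prime] {n : ℕ}

def cw (n : ℕ) : Fin 4 → ℤ := ![0, -(n:ℤ), 0, 0]
def dw (n : ℕ) : Fin 4 → ℤ := ![0, 0, 0, (n:ℤ)]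
def ew (n : ℕ) : Fin 4 → ℤ := ![0, 1-(n:ℤ), 0, 1]

lemma paraExp_eq_max (i j : Fin 4) :
    paraExp n i j = max (cw n i - cw n j) (dw n i - dw n j) := by
  fin_cases i <;> fin_cases j <;> simp [paraExp, cw, dw] <;> omega

lemma paraExp_triangle (i m l : Fin 4) :
    paraExp n i l ≤ paraExp n i m + paraExp n m l := by
  rw [paraExp_eq_max, paraExp_eq_max, paraExp_eq_max]; omega

lemma paraExp_diag (i : Fin 4) : paraExp n i i = 0 := by
  rw [paraExp_eq_max]; omega

lemma hq1 : (1:ℝ) < p := by exact_mod_cast (Fact.out : p.Prime).one_lt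
lemma hq0 : (0:ℝ) < p := lt_trans one_pos hq1
lemma hqne : (p:ℝ) ≠ 0 := ne_of_gt hq0
lemma zpowle {A B : ℤ} (h : A ≤ B) : (p:ℝ)^A ≤ (p:ℝ)^B :=
  (zpow_le_zpow_iff_right₀ hq1).2 h
lemma zpowinj {A B : ℤ} (h : (p:ℝ)^A = (p:ℝ)^B) : A = B :=
  zpow_right_injective₀ hq0 (ne_of_gt hq1) h
lemma zpow_mul_zpow (A B : ℤ) : (p:ℝ)^A * (p:ℝ)^B = (p:ℝ)^(A+B) :=
  (zpow_add₀ hqne A B).symm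
lemma mul_mem {x y : Matrix (Fin 4) (Fin 4) ℚ_[p]}
    (hx : x ∈ paraOrder p n) (hy : y ∈ paraOrder p n) : x * y ∈ paraOrder p n := by
  intro i l
  rw [Matrix.mul_apply]
  apply IsUltrametricDist.norm_sum_le_of_forall_le_of_nonneg (zpow_nonneg (le_of_lt hq0) _)
  intro m _
  rw [norm_mul]
  calc ‖x i m‖ * ‖y m l‖ ≤ (p:ℝ)^(-(paraExp n i m)) * (p:ℝ)^(-(paraExp n m l)) :=
        mul_le_mul (hx i m) (hy m l) (norm_nonneg _) (zpow_nonneg (le_of_lt hq0) _)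
  _ ≤ (p:ℝ)^(-(paraExp n i l)) := by
        rw [zpow_mul_zpow]
        exact zpowle (by have := paraExp_triangle (n := n) i m l; omega)

lemma smul_mem {x : Matrix (Fin 4) (Fin 4) ℚ_[p]} (c : ℚ_[p]) (hc : ‖c‖ ≤ 1)
    (hx : x ∈ paraOrder p n) : c • x ∈ paraOrder p n := by
  intro i j
  rw [Matrix.smul_apply, smul_eq_mul, norm_mul]
  calc ‖c‖ * ‖x i j‖ ≤ 1 * ((p:ℝ)^(-(paraExp n i j))) :=
    mul_le_mul hc (hx i j) (norm_nonneg _) zero_le_one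
  _ = _ := one_mul _

lemma std_mem (i j : Fin 4) (c : ℚ_[p]) (hc : ‖c‖ ≤ (p:ℝ)^(-(paraExp n i j))) :
    Matrix.single i j c ∈ paraOrder p n := by
  intro k l
  by_cases h : i = k ∧ j = l
  · obtain ⟨rfl, rfl⟩ := h
    rwa [Matrix.single_apply_same]
  · rw [Matrix.single_apply_of_ne _ _ _ _ _ h, norm_zero]
    positivity

lemma sandwich_apply (bm am : Matrix (Fin 4) (Fin 4) ℚ_[p]) (i j k l : Fin 4) (c : ℚ_[p]) :
    (bm * Matrix.single i j c * am) k l = bm k i * (c * am j l) := by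
  rw [Matrix.mul_assoc, Matrix.mul_apply, Finset.sum_eq_single i]
  · rw [Matrix.single_mul_apply_same]
  · intro m _ hm
    rw [Matrix.single_mul_apply_of_ne _ _ _ _ _ hm, mul_zero]
  · simp
lemma coeff_norm_le {x : Matrix (Fin 4) (Fin 4) ℚ_[p]} (hx : x ∈ paraOrder p n)
    {a b : Fin 4} {A B : ℤ} (h : A - paraExp n a b ≤ B) :
    (p:ℝ)^A * ‖x a b‖ ≤ (p:ℝ)^B := by
  calc (p:ℝ)^A * ‖x a b‖ ≤ (p:ℝ)^A * (p:ℝ)^(-(paraExp n a b)) :=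
        mul_le_mul_of_nonneg_left (hx a b) (by positivity)
  _ = (p:ℝ)^(A - paraExp n a b) := by rw [zpow_mul_zpow]; ring_nf
  _ ≤ _ := zpowle h

def σ4 : Fin 4 → Fin 4 := ![1,0,3,2]
def aW (n : ℕ) : Fin 4 → Fin 4 → ℕ :=
  fun i j => (if i = 0 ∨ i = 3 then n else 0) + (if j = 1 ∨ j = 2 then n else 0)

lemma WxW_entry (x : Matrix (Fin 4) (Fin 4) ℚ_[p]) (i j : Fin 4) :
    (WMat p n * x * WMat p n) i j = (p:ℚ_[p])^(aW n i j) * x (σ4 i) (σ4 j) := by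
  fin_cases i <;> fin_cases j <;>
    simp [WMat, Matrix.mul_apply, Fin.sum_univ_four, σ4, aW, pow_add, Matrix.vecHead, Matrix.vecTail, Matrix.vecMul, dotProduct] <;> try ring

lemma W_sq : WMat p n * WMat p n = ((p:ℚ_[p])^n) • (1 : Matrix (Fin 4) (Fin 4) ℚ_[p]) := by
  ext i j
  fin_cases i <;> fin_cases j <;>
    simp [WMat, Matrix.mul_apply, Fin.sum_univ_four, Matrix.one_apply, Matrix.vecHead, Matrix.vecTail, Matrix.vecMul, dotProduct]

lemma conjW_mem {x : Matrix (Fin 4) (Fin 4) ℚ_[p]} (hx : x ∈ paraOrder p n) :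
    ((p:ℚ_[p])^(-(n:ℤ))) • (WMat p n * x * WMat p n) ∈ paraOrder p n := by
  intro i j
  rw [Matrix.smul_apply, WxW_entry, smul_eq_mul, ← mul_assoc, norm_mul, norm_mul,
    Padic.norm_p_zpow, Padic.norm_p_pow, neg_neg, zpow_mul_zpow]
  exact coeff_norm_le hx (by fin_cases i <;> fin_cases j <;> simp [aW, σ4, paraExp] <;> omega)
lemma hpQ : (p:ℚ_[p]) ≠ 0 := Nat.cast_ne_zero.2 (Fact.out : p.Prime).ne_zero

lemma smul_mul2 (α β : ℚ_[p]) (A B : Matrix (Fin 4) (Fin 4) ℚ_[p]) :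
    (α•A) * (β•B) = (α*β) • (A*B) := by
  rw [Matrix.smul_mul, Matrix.mul_smul, smul_smul]

lemma smul_sandwich (α β : ℚ_[p]) (A x B : Matrix (Fin 4) (Fin 4) ℚ_[p]) :
    (α•A) * x * (β•B) = (α*β) • (A*x*B) := by
  simp only [Matrix.smul_mul, Matrix.mul_smul, smul_smul, Matrix.mul_assoc]
  rw [mul_comm β α]

lemma mem_normaliser_of {g g' : Matrix (Fin 4) (Fin 4) ℚ_[p]}
    (hg : g * g' = 1) (hg' : g' * g = 1)
    (h1 : ∀ x ∈ paraOrder p n, g' * x * g ∈ paraOrder p n)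
    (h2 : ∀ x ∈ paraOrder p n, g * x * g' ∈ paraOrder p n) :
    IsUnit g ∧ (fun x => g⁻¹ * x * g) '' paraOrder p n = paraOrder p n := by
  refine ⟨(Matrix.isUnit_iff_isUnit_det g).2 (Matrix.isUnit_det_of_right_inverse hg), ?_⟩
  rw [Matrix.inv_eq_right_inv hg]
  ext y
  constructor
  · rintro ⟨x, hx, rfl⟩
    exact h1 x hx
  · intro hy
    refine ⟨g * y * g', h2 y hy, ?_⟩
    show g' * (g * y * g') * g = y
    simp only [← Matrix.mul_assoc]
    rw [hg', Matrix.one_mul, Matrix.mul_assoc, hg', Matrix.mul_one]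

lemma easy_dir {g : Matrix (Fin 4) (Fin 4) ℚ_[p]} (k : ℤ) (μ : Fin 2)
    (u : Matrix (Fin 4) (Fin 4) ℚ_[p]) (hu : u ∈ paraOrder p n)
    (v : Matrix (Fin 4) (Fin 4) ℚ_[p]) (hv : v ∈ paraOrder p n)
    (huv : u * v = 1) (hvu : v * u = 1)
    (hgdef : g = ((p : ℚ_[p]) ^ k) • ((WMat p n) ^ (μ : ℕ) * u)) :
    IsUnit g ∧ (fun x => g⁻¹ * x * g) '' paraOrder p n = paraOrder p n := by
  fin_cases μ
  · -- μ = 0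
    have h0 : g = (p:ℚ_[p])^k • u := by rw [hgdef]; norm_num
    have hsc : ∀ A B : ℤ, A + B = 0 → (p:ℚ_[p])^A * (p:ℚ_[p])^B = 1 := by
      intro A B h; rw [← zpow_add₀ hpQ, h, zpow_zero]
    apply mem_normaliser_of (g' := (p:ℚ_[p])^(-k) • v)
    · rw [h0, smul_mul2, huv, hsc k (-k) (by ring), one_smul]
    · rw [h0, smul_mul2, hvu, hsc (-k) k (by ring), one_smul]
    · intro x hx
      have : ((p:ℚ_[p])^(-k) • v) * x * ((p:ℚ_[p])^k • u) = v * x * u := by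
        rw [smul_sandwich, hsc (-k) k (by ring), one_smul]
      rw [h0, this]
      exact mul_mem (mul_mem hv hx) hu
    · intro x hx
      have : ((p:ℚ_[p])^k • u) * x * ((p:ℚ_[p])^(-k) • v) = u * x * v := by
        rw [smul_sandwich, hsc k (-k) (by ring), one_smul]
      rw [h0, this]
      exact mul_mem (mul_mem hu hx) hv
  · -- μ = 1
    have h0 : g = (p:ℚ_[p])^k • (WMat p n * u) := by rw [hgdef]; norm_num
    have hWuvW : (WMat p n * u) * (v * WMat p n) = ((p:ℚ_[p])^(n:ℕ)) • 1 := by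
      rw [Matrix.mul_assoc, ← Matrix.mul_assoc u v, huv, Matrix.one_mul, ← W_sq]
    have hvWWu : (v * WMat p n) * (WMat p n * u) = ((p:ℚ_[p])^(n:ℕ)) • 1 := by
      rw [Matrix.mul_assoc, ← Matrix.mul_assoc (WMat p n), W_sq, Matrix.smul_mul,
        Matrix.one_mul, Matrix.mul_smul, hvu]
    have hsc : ∀ A B : ℤ, A + B + n = 0 → ((p:ℚ_[p])^A * (p:ℚ_[p])^B) • (((p:ℚ_[p])^(n:ℕ)) • (1 : Matrix (Fin 4) (Fin 4) ℚ_[p])) = 1 := by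
      intro A B h
      rw [smul_smul, ← zpow_natCast (p:ℚ_[p]) n, ← zpow_add₀ hpQ, ← zpow_add₀ hpQ, h, zpow_zero, one_smul]
    apply mem_normaliser_of (g' := (p:ℚ_[p])^(-k-n) • (v * WMat p n))
    · rw [h0, smul_mul2, hWuvW, hsc k (-k-n) (by ring)]
    · rw [h0, smul_mul2, hvWWu, hsc (-k-n) k (by ring)]
    · intro x hx
      have key : ((p:ℚ_[p])^(-k-n) • (v * WMat p n)) * x * ((p:ℚ_[p])^k • (WMat p n * u))
          = v * (((p:ℚ_[p])^(-(n:ℤ))) • (WMat p n * x * WMat p n)) * u := by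
        rw [smul_sandwich]
        simp only [Matrix.smul_mul, Matrix.mul_smul, smul_smul, Matrix.mul_assoc]
        congr 1
        rw [← zpow_add₀ hpQ]
        congr 1
        ring
      rw [h0, key]
      exact mul_mem (mul_mem hv (conjW_mem hx)) hu
    · intro x hx
      have key : ((p:ℚ_[p])^k • (WMat p n * u)) * x * ((p:ℚ_[p])^(-k-n) • (v * WMat p n))
          = ((p:ℚ_[p])^(-(n:ℤ))) • (WMat p n * (u * x * v) * WMat p n) := by
        rw [smul_sandwich]
        simp only [Matrix.smul_mul, Matrix.mul_smul, smul_smul, Matrix.mul_assoc]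
        congr 1
        rw [← zpow_add₀ hpQ]
        congr 1
        ring
      rw [h0, key]
      exact conjW_mem (mul_mem (mul_mem hu hx) hv)
lemma qmul_le {X : ℝ} {A B : ℤ} (h : X * (p:ℝ)^A ≤ (p:ℝ)^B) : X ≤ (p:ℝ)^(B - A) := by
  have h2 := mul_le_mul_of_nonneg_right h (zpow_nonneg (hq0 (p:=p)).le (-A))
  rwa [mul_assoc, zpow_mul_zpow, show A + -A = 0 by ring, zpow_zero, mul_one, zpow_mul_zpow,
    show B + -A = B - A by ring] at h2

lemma qmul_le' {X : ℝ} {A B : ℤ} (h : (p:ℝ)^A * X ≤ (p:ℝ)^B) : X ≤ (p:ℝ)^(B - A) :=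
  qmul_le (by rwa [mul_comm] at h)

lemma one_le_mul_q {X : ℝ} {A : ℤ} (h : 1 ≤ X * (p:ℝ)^A) : (p:ℝ)^(-A) ≤ X := by
  have h2 := mul_le_mul_of_nonneg_right h (zpow_nonneg (hq0 (p:=p)).le (-A))
  rwa [one_mul, mul_assoc, zpow_mul_zpow, show A + -A = 0 by ring, zpow_zero, mul_one] at h2

lemma prod_zpow_sum (s : Finset (Fin 4)) (g : Fin 4 → ℤ) :
    ∏ i ∈ s, (p:ℝ)^(g i) = (p:ℝ)^(∑ i ∈ s, g i) := by
  induction s using Finset.cons_induction with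
  | empty => simp
  | cons i s hi ih => rw [Finset.prod_cons, Finset.sum_cons, ih, zpow_mul_zpow]

section Hard
variable {a b : Matrix (Fin 4) (Fin 4) ℚ_[p]}

lemma master (hconj : ∀ x ∈ paraOrder p n, b * x * a ∈ paraOrder p n) (i k l : Fin 4) :
    ‖b k i‖ * ‖a i l‖ ≤ (p:ℝ)^(-(paraExp n k l)) := by
  have hmem := hconj (Matrix.single i i 1)
    (std_mem i i 1 (by rw [paraExp_diag]; simp))
  have h2 := hmem k l
  rwa [sandwich_apply, one_mul, norm_mul] at h2

lemma row_ne (hab : a * b = 1) (i : Fin 4) : ∃ m, a i m ≠ 0 := by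
  by_contra h
  push_neg at h
  have h0 : (a * b) i i = 0 := by
    rw [Matrix.mul_apply]
    exact Finset.sum_eq_zero fun m _ => by rw [h m, zero_mul]
  rw [hab, Matrix.one_apply_eq] at h0
  exact one_ne_zero h0

lemma exists_kappa (hab : a * b = 1)
    (hconj : ∀ x ∈ paraOrder p n, b * x * a ∈ paraOrder p n)
    (w : Fin 4 → ℤ) (hw : ∀ i j, w i - w j ≤ paraExp n i j) :
    ∃ k : Fin 4 → ℤ,
      (∀ i j, ‖a i j‖ ≤ (p:ℝ)^(w j - k i)) ∧
      (∀ i, ∃ m, ‖a i m‖ = (p:ℝ)^(w m - k i)) ∧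
      (∀ i j, ‖b i j‖ ≤ (p:ℝ)^(k j - w i)) ∧
      (∀ i j, k i - k j ≤ paraExp n i j) ∧
      ‖a.det‖ = (p:ℝ)^(∑ i, w i - ∑ i, k i) := by
  have hne : (Finset.univ : Finset (Fin 4)).Nonempty := Finset.univ_nonempty
  set κ : Fin 4 → ℝ := fun i => Finset.univ.sup' hne (fun m => ‖a i m‖ * (p:ℝ)^(-(w m)))
    with hκ
  have hk1 : ∀ i j, ‖a i j‖ * (p:ℝ)^(-(w j)) ≤ κ i := fun i j =>
    Finset.le_sup' (fun m => ‖a i m‖ * (p:ℝ)^(-(w m))) (Finset.mem_univ j)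
  have hex : ∀ i, ∃ ki : ℤ, κ i = (p:ℝ)^(-ki) ∧ ∃ m, ‖a i m‖ = (p:ℝ)^(w m - ki) := by
    intro i
    obtain ⟨m, -, hm⟩ := Finset.exists_mem_eq_sup' hne (fun m => ‖a i m‖ * (p:ℝ)^(-(w m)))
    obtain ⟨m₀, hm₀⟩ := row_ne hab i
    have hm' : κ i = ‖a i m‖ * (p:ℝ)^(-(w m)) := hm
    have hpos : 0 < κ i := by
      have h9 : (0:ℝ) < ‖a i m₀‖ * (p:ℝ)^(-(w m₀)) :=
        mul_pos (norm_pos_iff.2 hm₀) (zpow_pos hq0 _)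
      exact lt_of_lt_of_le h9 (hk1 i m₀)
    have ham : a i m ≠ 0 := by
      intro h0
      rw [hm', h0] at hpos
      simp at hpos
    refine ⟨(a i m).valuation + w m, ?_, m, ?_⟩
    · rw [hm', Padic.norm_eq_zpow_neg_valuation ham, zpow_mul_zpow]
      congr 1
      ring
    · rw [Padic.norm_eq_zpow_neg_valuation ham]
      congr 1
      ring
  choose k hkval hkatt using hex
  have hα : ∀ i j, ‖a i j‖ ≤ (p:ℝ)^(w j - k i) := by
    intro i j
    have := (hk1 i j).trans (le_of_eq (hkval i))
    have h2 := qmul_le this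
    rwa [show -k i - -(w j) = w j - k i by ring] at h2
  have hβ : ∀ i j, ‖b i j‖ ≤ (p:ℝ)^(k j - w i) := by
    intro i j
    obtain ⟨m, hm⟩ := hkatt j
    have h1 : ‖b i j‖ * (p:ℝ)^(w m - k j) ≤ (p:ℝ)^(w m - w i) := by
      rw [← hm]
      exact (master hconj j i m).trans (zpowle (by have := hw i m; omega))
    have h2 := qmul_le h1
    rwa [show w m - w i - (w m - k j) = k j - w i by ring] at h2
  refine ⟨k, hα, hkatt, hβ, ?_, ?_⟩
  · -- stability
    intro i j
    set e := paraExp n i j with he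
    have hxmem : Matrix.single i j ((p:ℚ_[p])^e) ∈ paraOrder p n :=
      std_mem i j _ (le_of_eq (Padic.norm_p_zpow e))
    have hr := hconj _ hxmem
    have hid : ∀ l, (p:ℚ_[p])^e * a j l = ∑ m, a i m * (b * Matrix.single i j ((p:ℚ_[p])^e) * a) m l := by
      intro l
      have h3 : a * (b * Matrix.single i j ((p:ℚ_[p])^e) * a)
          = Matrix.single i j ((p:ℚ_[p])^e) * a := by
        rw [← Matrix.mul_assoc, ← Matrix.mul_assoc, hab, Matrix.one_mul]
      have h4 := congrFun (congrFun h3 i) l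
      rw [Matrix.mul_apply] at h4
      rw [h4, Matrix.single_mul_apply_same]
    have hterm : ∀ l, ‖a j l‖ * (p:ℝ)^(-(w l)) ≤ (p:ℝ)^(e - k i) := by
      intro l
      have h5 : ‖(p:ℚ_[p])^e * a j l‖ ≤ (p:ℝ)^(w l - k i) := by
        rw [hid l]
        apply IsUltrametricDist.norm_sum_le_of_forall_le_of_nonneg (zpow_nonneg hq0.le _)
        intro m _
        rw [norm_mul]
        calc ‖a i m‖ * ‖(b * Matrix.single i j ((p:ℚ_[p])^e) * a) m l‖
            ≤ (p:ℝ)^(w m - k i) * (p:ℝ)^(-(paraExp n m l)) :=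
              mul_le_mul (hα i m) (hr m l) (norm_nonneg _) (zpow_nonneg hq0.le _)
        _ ≤ (p:ℝ)^(w m - k i) * (p:ℝ)^(w l - w m) :=
              mul_le_mul_of_nonneg_left (zpowle (by have := hw m l; omega)) (zpow_nonneg hq0.le _)
        _ = (p:ℝ)^(w l - k i) := by rw [zpow_mul_zpow]; congr 1; ring
      rw [norm_mul, Padic.norm_p_zpow] at h5
      have h6 := qmul_le' h5
      have h7 := mul_le_mul_of_nonneg_right h6 (zpow_nonneg (hq0 (p:=p)).le (-(w l)))
      rwa [zpow_mul_zpow, show w l - k i - -e + -(w l) = e - k i by ring] at h7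
    have h8 : κ j ≤ (p:ℝ)^(e - k i) := Finset.sup'_le hne _ fun l _ => hterm l
    rw [hkval j] at h8
    have := (zpow_le_zpow_iff_right₀ hq1).1 h8
    omega
  · -- determinant
    have hsign : ∀ (s : ℤˣ) (x : ℚ_[p]), ‖s • x‖ = ‖x‖ := by
      intro s x
      rcases Int.units_eq_one_or s with h | h <;> subst h <;>
        simp [Units.smul_def, norm_neg]
    have hda : ‖a.det‖ ≤ (p:ℝ)^(∑ i, w i - ∑ i, k i) := by
      rw [Matrix.det_apply]
      apply IsUltrametricDist.norm_sum_le_of_forall_le_of_nonneg (zpow_nonneg hq0.le _)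
      intro σ _
      rw [hsign, norm_prod]
      calc ∏ i, ‖a (σ i) i‖ ≤ ∏ i, (p:ℝ)^(w i - k (σ i)) :=
            Finset.prod_le_prod (fun _ _ => norm_nonneg _) (fun i _ => hα (σ i) i)
      _ = (p:ℝ)^(∑ i, (w i - k (σ i))) := prod_zpow_sum _ _
      _ = (p:ℝ)^(∑ i, w i - ∑ i, k i) := by
            congr 1
            rw [Finset.sum_sub_distrib]
            congr 1
            exact Equiv.sum_comp σ k
    have hdb : ‖b.det‖ ≤ (p:ℝ)^(∑ i, k i - ∑ i, w i) := by
      rw [Matrix.det_apply]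
      apply IsUltrametricDist.norm_sum_le_of_forall_le_of_nonneg (zpow_nonneg hq0.le _)
      intro σ _
      rw [hsign, norm_prod]
      calc ∏ i, ‖b (σ i) i‖ ≤ ∏ i, (p:ℝ)^(k i - w (σ i)) :=
            Finset.prod_le_prod (fun _ _ => norm_nonneg _) (fun i _ => hβ (σ i) i)
      _ = (p:ℝ)^(∑ i, (k i - w (σ i))) := prod_zpow_sum _ _
      _ = (p:ℝ)^(∑ i, k i - ∑ i, w i) := by
            congr 1
            rw [Finset.sum_sub_distrib]
            congr 1
            exact Equiv.sum_comp σ w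
    have hdet1 : ‖a.det‖ * ‖b.det‖ = 1 := by
      rw [← norm_mul, ← Matrix.det_mul, hab, Matrix.det_one, norm_one]
    have hge : (p:ℝ)^(∑ i, w i - ∑ i, k i) ≤ ‖a.det‖ := by
      have h1 : (1:ℝ) ≤ ‖a.det‖ * (p:ℝ)^(∑ i, k i - ∑ i, w i) := by
        rw [← hdet1]
        exact mul_le_mul_of_nonneg_left hdb (norm_nonneg _)
      have h2 := one_le_mul_q h1
      rwa [show -(∑ i, k i - ∑ i, w i) = ∑ i, w i - ∑ i, k i by ring] at h2
    exact le_antisymm hda hge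

end Hard
lemma W_row (x : Matrix (Fin 4) (Fin 4) ℚ_[p]) (j : Fin 4) :
    (WMat p n * x) 0 j = (p:ℚ_[p])^n * x 1 j ∧ (WMat p n * x) 1 j = x 0 j ∧
    (WMat p n * x) 2 j = x 3 j ∧ (WMat p n * x) 3 j = (p:ℚ_[p])^n * x 2 j := by
  refine ⟨?_, ?_, ?_, ?_⟩ <;>
    simp [WMat, Matrix.mul_apply, Fin.sum_univ_four, Matrix.vecHead, Matrix.vecTail,
      Matrix.vecMul, dotProduct]

lemma W_col (x : Matrix (Fin 4) (Fin 4) ℚ_[p]) (i : Fin 4) :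
    (x * WMat p n) i 0 = x i 1 ∧ (x * WMat p n) i 1 = (p:ℚ_[p])^n * x i 0 ∧
    (x * WMat p n) i 2 = (p:ℚ_[p])^n * x i 3 ∧ (x * WMat p n) i 3 = x i 2 := by
  refine ⟨?_, ?_, ?_, ?_⟩ <;>
    simp [WMat, Matrix.mul_apply, Fin.sum_univ_four, Matrix.vecHead, Matrix.vecTail,
      Matrix.vecMul, dotProduct] <;> ring

lemma entry_bound {Y : ℝ} {A B C : ℤ} (hY : Y ≤ (p:ℝ)^B) (h : A + B ≤ C) :
    (p:ℝ)^A * Y ≤ (p:ℝ)^C :=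
  le_trans (mul_le_mul_of_nonneg_left hY (zpow_nonneg (hq0 (p:=p)).le _))
    (by rw [zpow_mul_zpow]; exact zpowle h)
lemma hard_dir {g : Matrix (Fin 4) (Fin 4) ℚ_[p]} (hg : IsUnit g)
    (himg : (fun x => g⁻¹ * x * g) '' paraOrder p n = paraOrder p n) :
    ∃ (k : ℤ) (μ : Fin 2) (u : Matrix (Fin 4) (Fin 4) ℚ_[p]), u ∈ paraOrder p n ∧
      (∃ v ∈ paraOrder p n, u * v = 1 ∧ v * u = 1) ∧
      g = ((p : ℚ_[p]) ^ k) • ((WMat p n) ^ (μ : ℕ) * u) := by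
  have hdet : IsUnit g.det := (Matrix.isUnit_iff_isUnit_det g).1 hg
  have hab : g * g⁻¹ = 1 := Matrix.mul_nonsing_inv g hdet
  have hba : g⁻¹ * g = 1 := Matrix.nonsing_inv_mul g hdet
  have hconj : ∀ x ∈ paraOrder p n, g⁻¹ * x * g ∈ paraOrder p n := by
    intro x hx
    rw [← himg]
    exact Set.mem_image_of_mem _ hx
  have hwc : ∀ i j, cw n i - cw n j ≤ paraExp n i j := fun i j => by
    rw [paraExp_eq_max]; exact le_max_left _ _
  have hwd : ∀ i j, dw n i - dw n j ≤ paraExp n i j := fun i j => by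
    rw [paraExp_eq_max]; exact le_max_right _ _
  have hcd : ∀ m, cw n m ≤ dw n m ∧ dw n m ≤ cw n m + n := by
    intro m; fin_cases m <;> simp [cw, dw] <;> omega
  obtain ⟨k, hkα, hkatt, hkβ, hkS, hkdet⟩ := exists_kappa hab hconj (cw n) hwc
  obtain ⟨k', hk'α, hk'att, hk'β, hk'S, hk'det⟩ := exists_kappa hab hconj (dw n) hwd
  have hle1 : ∀ i, k i ≤ k' i := by
    intro i
    obtain ⟨m, hm⟩ := hk'att i
    have h1 := hkα i m
    rw [hm] at h1
    have h2 := (zpow_le_zpow_iff_right₀ (hq1 (p:=p))).1 h1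
    have := (hcd m).1
    omega
  have hle2 : ∀ i, k' i ≤ k i + n := by
    intro i
    obtain ⟨m, hm⟩ := hkatt i
    have h1 := hk'α i m
    rw [hm] at h1
    have h2 := (zpow_le_zpow_iff_right₀ (hq1 (p:=p))).1 h1
    have := (hcd m).2
    omega
  have hsum : ∑ i, k' i = ∑ i, k i + 2*n := by
    have h3 := zpowinj (hkdet.symm.trans hk'det)
    have hc4 : ∑ i, cw n i = -(n:ℤ) := by simp [cw, Fin.sum_univ_four]
    have hd4 : ∑ i, dw n i = (n:ℤ) := by simp [dw, Fin.sum_univ_four]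
    omega
  -- stability facts at concrete indices
  have s02 : k 0 - k 2 ≤ 0 := by simpa [paraExp] using hkS 0 2
  have s20 : k 2 - k 0 ≤ 0 := by simpa [paraExp] using hkS 2 0
  have s13 : k 1 - k 3 ≤ -(n:ℤ) := by simpa [paraExp] using hkS 1 3
  have s31 : k 3 - k 1 ≤ (n:ℤ) := by simpa [paraExp] using hkS 3 1
  have s10 : k 1 - k 0 ≤ 0 := by simpa [paraExp] using hkS 1 0
  have s01 : k 0 - k 1 ≤ (n:ℤ) := by simpa [paraExp] using hkS 0 1
  have t02 : k' 0 - k' 2 ≤ 0 := by simpa [paraExp] using hk'S 0 2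
  have t20 : k' 2 - k' 0 ≤ 0 := by simpa [paraExp] using hk'S 2 0
  have t13 : k' 1 - k' 3 ≤ -(n:ℤ) := by simpa [paraExp] using hk'S 1 3
  have t31 : k' 3 - k' 1 ≤ (n:ℤ) := by simpa [paraExp] using hk'S 3 1
  have t10 : k' 1 - k' 0 ≤ 0 := by simpa [paraExp] using hk'S 1 0
  have t01 : k' 0 - k' 1 ≤ (n:ℤ) := by simpa [paraExp] using hk'S 0 1
  have hsum4 : k' 0 + k' 1 + k' 2 + k' 3 = k 0 + k 1 + k 2 + k 3 + 2*n := by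
    rw [Fin.sum_univ_four, Fin.sum_univ_four] at hsum
    omega
  have hsplit : k' 0 = k 0 ∨ k' 1 = k 1 := by
    rcases Nat.eq_zero_or_pos n with hn | hn
    · left
      have h1 := hle1 0
      have h2 := hle2 0
      omega
    · have hn1 : (1:ℤ) ≤ (n:ℤ) := by exact_mod_cast hn
      have hwe : ∀ i j, ew n i - ew n j ≤ paraExp n i j := by
        intro i j
        rw [paraExp_eq_max]
        fin_cases i <;> fin_cases j <;> simp [ew, cw, dw] <;> omega
      obtain ⟨k'', h''α, h''att, h''β, h''S, h''det⟩ := exists_kappa hab hconj (ew n) hwe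
      have hed : ∀ m, ew n m ≤ dw n m ∧ ew n m ≤ cw n m + 1 ∧
          (ew n m = dw n m ∨ ew n m = cw n m + 1) := by
        intro m; fin_cases m <;> simp [ew, cw, dw] <;> omega
      have hmin : ∀ i, k'' i = min (k' i) (k i + 1) := by
        intro i
        have hub1 : k'' i ≤ k' i := by
          obtain ⟨m, hm⟩ := hk'att i
          have h1 := h''α i m
          rw [hm] at h1
          have h2 := (zpow_le_zpow_iff_right₀ (hq1 (p:=p))).1 h1
          have := (hed m).1
          omega
        have hub2 : k'' i ≤ k i + 1 := by
          obtain ⟨m, hm⟩ := hkatt i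
          have h1 := h''α i m
          rw [hm] at h1
          have h2 := (zpow_le_zpow_iff_right₀ (hq1 (p:=p))).1 h1
          have := (hed m).2.1
          omega
        have hlb : k' i ≤ k'' i ∨ k i + 1 ≤ k'' i := by
          obtain ⟨m, hm⟩ := h''att i
          rcases (hed m).2.2 with he | he
          · left
            have h1 := hk'α i m
            rw [hm] at h1
            have h2 := (zpow_le_zpow_iff_right₀ (hq1 (p:=p))).1 h1
            omega
          · right
            have h1 := hkα i m
            rw [hm] at h1
            have h2 := (zpow_le_zpow_iff_right₀ (hq1 (p:=p))).1 h1
            omega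
        omega
      have hsum'' : ∑ i, k'' i = ∑ i, k i + 2 := by
        have h3 := zpowinj (hkdet.symm.trans h''det)
        have hc4 : ∑ i, cw n i = -(n:ℤ) := by simp [cw, Fin.sum_univ_four]
        have he4 : ∑ i, ew n i = 2-(n:ℤ) := by simp [ew, Fin.sum_univ_four]; ring
        omega
      rw [Fin.sum_univ_four, Fin.sum_univ_four] at hsum''
      have m0 := hmin 0
      have m1 := hmin 1
      have m2 := hmin 2
      have m3 := hmin 3
      have l10 := hle1 0
      have l20 := hle2 0
      have l11 := hle1 1
      have l21 := hle2 1
      omega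
  have hsc : ∀ A B : ℤ, A + B = 0 → (p:ℚ_[p])^A * (p:ℚ_[p])^B = 1 := by
    intro A B h
    rw [← zpow_add₀ hpQ, h, zpow_zero]
  have hcw0 : cw n 0 = 0 := by simp [cw]
  have hcw1 : cw n 1 = -(n:ℤ) := by simp [cw]
  have hcw2 : cw n 2 = 0 := by simp [cw]
  have hcw3 : cw n 3 = 0 := by simp [cw]
  have hdw0 : dw n 0 = 0 := by simp [dw]
  have hdw1 : dw n 1 = 0 := by simp [dw]
  have hdw2 : dw n 2 = 0 := by simp [dw]
  have hdw3 : dw n 3 = (n:ℤ) := by simp [dw]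
  have hi4 : ∀ i : Fin 4, i = 0 ∨ i = 1 ∨ i = 2 ∨ i = 3 := by decide
  rcases hsplit with hA | hB
  · -- μ = 0 case
    set x := k 0 with hxdef
    have hkc : ∀ i, k i = x + cw n i := by
      intro i
      rcases hi4 i with rfl | rfl | rfl | rfl
      · rw [hcw0]; omega
      · rw [hcw1]; omega
      · rw [hcw2]; omega
      · rw [hcw3]; omega
    have hk'd : ∀ i, k' i = x + dw n i := by
      intro i
      rcases hi4 i with rfl | rfl | rfl | rfl
      · rw [hdw0]; omega
      · rw [hdw1]; omega
      · rw [hdw2]; omega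
      · rw [hdw3]; omega
    have hua : ∀ i j, ‖g i j‖ ≤ (p:ℝ)^(-x - paraExp n i j) := by
      intro i j
      rw [paraExp_eq_max]
      rcases le_total (cw n i - cw n j) (dw n i - dw n j) with hc | hc
      · rw [max_eq_right hc]
        refine (hk'α i j).trans (zpowle ?_)
        have h1 := hk'd i
        omega
      · rw [max_eq_left hc]
        refine (hkα i j).trans (zpowle ?_)
        have h1 := hkc i
        omega
    have hub : ∀ i j, ‖g⁻¹ i j‖ ≤ (p:ℝ)^(x - paraExp n i j) := by
      intro i j
      rw [paraExp_eq_max]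
      rcases le_total (cw n i - cw n j) (dw n i - dw n j) with hc | hc
      · rw [max_eq_right hc]
        refine (hk'β i j).trans (zpowle ?_)
        have h1 := hk'd j
        omega
      · rw [max_eq_left hc]
        refine (hkβ i j).trans (zpowle ?_)
        have h1 := hkc j
        omega
    refine ⟨x, 0, (p:ℚ_[p])^(-x) • g, ?_, ⟨(p:ℚ_[p])^x • g⁻¹, ?_, ?_, ?_⟩, ?_⟩
    · intro i j
      rw [Matrix.smul_apply, smul_eq_mul, norm_mul, Padic.norm_p_zpow, neg_neg]
      exact entry_bound (hua i j) (by omega)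
    · intro i j
      rw [Matrix.smul_apply, smul_eq_mul, norm_mul, Padic.norm_p_zpow]
      exact entry_bound (hub i j) (by omega)
    · rw [smul_mul2, hab, hsc (-x) x (by ring), one_smul]
    · rw [smul_mul2, hba, hsc x (-x) (by ring), one_smul]
    · simp only [Fin.isValue, Fin.val_zero, pow_zero, Matrix.one_mul, smul_smul,
        hsc x (-x) (by ring), one_smul]
  · -- μ = 1 case
    set x := k 0 with hxdef
    have hkd : ∀ i, k i = x + dw n i := by
      intro i
      rcases hi4 i with rfl | rfl | rfl | rfl
      · rw [hdw0]; omega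
      · rw [hdw1]; omega
      · rw [hdw2]; omega
      · rw [hdw3]; omega
    have hk'c : ∀ i, k' i = (x + n) + cw n i := by
      intro i
      rcases hi4 i with rfl | rfl | rfl | rfl
      · rw [hcw0]; omega
      · rw [hcw1]; omega
      · rw [hcw2]; omega
      · rw [hcw3]; omega
    refine ⟨x, 1, (p:ℚ_[p])^(-(x+(n:ℤ))) • (WMat p n * g), ?_,
      ⟨(p:ℚ_[p])^x • (g⁻¹ * WMat p n), ?_, ?_, ?_⟩, ?_⟩
    · -- u ∈ R
      intro i j
      rw [Matrix.smul_apply, smul_eq_mul, paraExp_eq_max]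
      rcases hi4 i with rfl | rfl | rfl | rfl
      · rw [(W_row g j).1, ← mul_assoc, norm_mul, norm_mul, Padic.norm_p_zpow,
          Padic.norm_p_pow, zpow_mul_zpow]
        rcases le_total (cw n 0 - cw n j) (dw n 0 - dw n j) with hc | hc
        · rw [max_eq_right hc]
          exact entry_bound (hk'α 1 j) (by have h1 := hk'c 1; omega)
        · rw [max_eq_left hc]
          exact entry_bound (hkα 1 j) (by have h1 := hkd 1; omega)
      · rw [(W_row g j).2.1, norm_mul, Padic.norm_p_zpow]
        rcases le_total (cw n 1 - cw n j) (dw n 1 - dw n j) with hc | hc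
        · rw [max_eq_right hc]
          exact entry_bound (hk'α 0 j) (by have h1 := hk'c 0; omega)
        · rw [max_eq_left hc]
          exact entry_bound (hkα 0 j) (by have h1 := hkd 0; omega)
      · rw [(W_row g j).2.2.1, norm_mul, Padic.norm_p_zpow]
        rcases le_total (cw n 2 - cw n j) (dw n 2 - dw n j) with hc | hc
        · rw [max_eq_right hc]
          exact entry_bound (hk'α 3 j) (by have h1 := hk'c 3; omega)
        · rw [max_eq_left hc]
          exact entry_bound (hkα 3 j) (by have h1 := hkd 3; omega)
      · rw [(W_row g j).2.2.2, ← mul_assoc, norm_mul, norm_mul, Padic.norm_p_zpow,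
          Padic.norm_p_pow, zpow_mul_zpow]
        rcases le_total (cw n 3 - cw n j) (dw n 3 - dw n j) with hc | hc
        · rw [max_eq_right hc]
          exact entry_bound (hk'α 2 j) (by have h1 := hk'c 2; omega)
        · rw [max_eq_left hc]
          exact entry_bound (hkα 2 j) (by have h1 := hkd 2; omega)
    · -- v ∈ R
      intro i j
      rw [Matrix.smul_apply, smul_eq_mul, paraExp_eq_max]
      rcases hi4 j with rfl | rfl | rfl | rfl
      · rw [(W_col g⁻¹ i).1, norm_mul, Padic.norm_p_zpow]
        rcases le_total (cw n i - cw n 0) (dw n i - dw n 0) with hc | hc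
        · rw [max_eq_right hc]
          exact entry_bound (hk'β i 1) (by have h1 := hk'c 1; omega)
        · rw [max_eq_left hc]
          exact entry_bound (hkβ i 1) (by have h1 := hkd 1; omega)
      · rw [(W_col g⁻¹ i).2.1, ← mul_assoc, norm_mul, norm_mul, Padic.norm_p_zpow,
          Padic.norm_p_pow, zpow_mul_zpow]
        rcases le_total (cw n i - cw n 1) (dw n i - dw n 1) with hc | hc
        · rw [max_eq_right hc]
          exact entry_bound (hk'β i 0) (by have h1 := hk'c 0; omega)
        · rw [max_eq_left hc]
          exact entry_bound (hkβ i 0) (by have h1 := hkd 0; omega)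
      · rw [(W_col g⁻¹ i).2.2.1, ← mul_assoc, norm_mul, norm_mul, Padic.norm_p_zpow,
          Padic.norm_p_pow, zpow_mul_zpow]
        rcases le_total (cw n i - cw n 2) (dw n i - dw n 2) with hc | hc
        · rw [max_eq_right hc]
          exact entry_bound (hk'β i 3) (by have h1 := hk'c 3; omega)
        · rw [max_eq_left hc]
          exact entry_bound (hkβ i 3) (by have h1 := hkd 3; omega)
      · rw [(W_col g⁻¹ i).2.2.2, norm_mul, Padic.norm_p_zpow]
        rcases le_total (cw n i - cw n 3) (dw n i - dw n 3) with hc | hc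
        · rw [max_eq_right hc]
          exact entry_bound (hk'β i 2) (by have h1 := hk'c 2; omega)
        · rw [max_eq_left hc]
          exact entry_bound (hkβ i 2) (by have h1 := hkd 2; omega)
    · -- u * v = 1
      have inner1 : (WMat p n * g) * (g⁻¹ * WMat p n) = ((p:ℚ_[p])^(n:ℕ)) • 1 := by
        rw [Matrix.mul_assoc, ← Matrix.mul_assoc g, hab, Matrix.one_mul, W_sq]
      rw [smul_mul2, inner1, smul_smul]
      rw [show ((p:ℚ_[p])^(-(x+(n:ℤ))) * (p:ℚ_[p])^x) * (p:ℚ_[p])^(n:ℕ) = 1 by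
        rw [← zpow_natCast (p:ℚ_[p]) n, ← zpow_add₀ hpQ, ← zpow_add₀ hpQ,
          show -(x+(n:ℤ)) + x + n = 0 by ring, zpow_zero], one_smul]
    · -- v * u = 1
      have inner2 : (g⁻¹ * WMat p n) * (WMat p n * g) = ((p:ℚ_[p])^(n:ℕ)) • 1 := by
        rw [Matrix.mul_assoc, ← Matrix.mul_assoc (WMat p n), W_sq, Matrix.smul_mul,
          Matrix.one_mul, Matrix.mul_smul, hba]
      rw [smul_mul2, inner2, smul_smul]
      rw [show ((p:ℚ_[p])^x * (p:ℚ_[p])^(-(x+(n:ℤ)))) * (p:ℚ_[p])^(n:ℕ) = 1 by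
        rw [← zpow_natCast (p:ℚ_[p]) n, ← zpow_add₀ hpQ, ← zpow_add₀ hpQ,
          show x + -(x+(n:ℤ)) + n = 0 by ring, zpow_zero], one_smul]
    · -- g = p^x • (W^1 * u)
      symm
      simp only [Fin.isValue, Fin.val_one, pow_one]
      rw [Matrix.mul_smul, smul_smul, ← Matrix.mul_assoc, W_sq, Matrix.smul_mul,
        Matrix.one_mul, smul_smul]
      rw [show ((p:ℚ_[p])^x * (p:ℚ_[p])^(-(x+(n:ℤ)))) * (p:ℚ_[p])^(n:ℕ) = 1 by
        rw [← zpow_natCast (p:ℚ_[p]) n, ← zpow_add₀ hpQ, ← zpow_add₀ hpQ,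
          show x + -(x+(n:ℤ)) + n = 0 by ring, zpow_zero], one_smul]

end Para

/-- The normaliser in `GL₄(ℚ_p)` of the paramodular order `R` of
level `pⁿ` equals `⋃_{μ∈{0,1}} p^ℤ · W_{pⁿ}^μ · R^×`. -/
theorem normaliser_of_paramodular_order :
    {g : Matrix (Fin 4) (Fin 4) ℚ_[p] | IsUnit g ∧
        (fun x => g⁻¹ * x * g) '' paraOrder p n = paraOrder p n}
    = {g : Matrix (Fin 4) (Fin 4) ℚ_[p] | ∃ (k : ℤ) (μ : Fin 2)
        (u : Matrix (Fin 4) (Fin 4) ℚ_[p]), u ∈ paraOrder p n ∧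
        (∃ v ∈ paraOrder p n, u * v = 1 ∧ v * u = 1) ∧
        g = ((p : ℚ_[p]) ^ k) • ((WMat p n) ^ (μ : ℕ) * u)} := by
  ext g
  simp only [Set.mem_setOf_eq]
  constructor
  · rintro ⟨hg, himg⟩
    exact Para.hard_dir hg himg
  · rintro ⟨k, μ, u, hu, ⟨v, hv, huv, hvu⟩, hgdef⟩
    exact Para.easy_dir k μ u hu v hv huv hvu hgdef
end

section
/- If A ∈ M₂(ℚ_p) lies in (1/pⁿ)ℤ_p·I₂ + M₂(ℤ_p) and det(A) ∈ ℤ_p, then A ∈ M₂(ℤ_p). Similarly, if A ∈ (1/pⁿ)ℤ_p·I₂ + [[ℤ_p, p^{−n}ℤ_p],[pⁿℤ_p, ℤ_p]] and det(A) ∈ ℤ_p, then A ∈ [[ℤ_p, p^{−n}ℤ_p],[pⁿℤ_p, ℤ_p]]. -/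
open scoped Matrix

variable (p : ℕ) [Fact p.Prime] (n : ℕ)

/-- Exponent pattern for the lattice `[[ℤ_p, p^{−n}ℤ_p],[pⁿℤ_p, ℤ_p]]`. -/
def latExp (i j : Fin 2) : ℤ :=
  if i = 0 ∧ j = 1 then -(n : ℤ) else if i = 1 ∧ j = 0 then (n : ℤ) else 0

private lemma key_scalar_le_one {p : ℕ} [Fact p.Prime]
    (A B : Matrix (Fin 2) (Fin 2) ℚ_[p]) (c : ℚ_[p])
    (hB0 : ‖B 0 0‖ ≤ 1) (hB1 : ‖B 1 1‖ ≤ 1)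
    (hoff : ‖A 0 1 * A 1 0‖ ≤ 1)
    (hA : A = c • (1 : Matrix (Fin 2) (Fin 2) ℚ_[p]) + B)
    (hdet : ‖A.det‖ ≤ 1) : ‖c‖ ≤ 1 := by
  by_contra hlt
  push_neg at hlt
  have h00 : A 0 0 = c + B 0 0 := by
    simp [hA, Matrix.add_apply, Matrix.smul_apply, Matrix.one_apply]
  have h11 : A 1 1 = c + B 1 1 := by
    simp [hA, Matrix.add_apply, Matrix.smul_apply, Matrix.one_apply]
  have hA0 : ‖c‖ ≤ ‖A 0 0‖ := by
    have hc : c = A 0 0 + -(B 0 0) := by rw [h00]; ring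
    have := Padic.nonarchimedean (A 0 0) (-(B 0 0))
    rw [← hc, norm_neg] at this
    rcases le_max_iff.mp this with h | h
    · exact h
    · linarith
  have hA1 : ‖c‖ ≤ ‖A 1 1‖ := by
    have hc : c = A 1 1 + -(B 1 1) := by rw [h11]; ring
    have := Padic.nonarchimedean (A 1 1) (-(B 1 1))
    rw [← hc, norm_neg] at this
    rcases le_max_iff.mp this with h | h
    · exact h
    · linarith
  have hprod : A 0 0 * A 1 1 = A.det + A 0 1 * A 1 0 := by
    rw [Matrix.det_fin_two]; ring
  have hle : ‖A 0 0 * A 1 1‖ ≤ 1 := by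
    rw [hprod]
    exact le_trans (Padic.nonarchimedean _ _) (max_le hdet hoff)
  rw [norm_mul] at hle
  nlinarith [norm_nonneg c, norm_nonneg (A 0 0)]

/-- If `A ∈ (1/pⁿ)ℤ_p·I₂ + M₂(ℤ_p)` has integral determinant, then
`A ∈ M₂(ℤ_p)`.  Similarly, if `A ∈ (1/pⁿ)ℤ_p·I₂ + [[ℤ_p, p^{−n}ℤ_p],[pⁿℤ_p, ℤ_p]]` has
integral determinant, then `A ∈ [[ℤ_p, p^{−n}ℤ_p],[pⁿℤ_p, ℤ_p]]`. -/
theorem scalar_plus_integral_with_integral_det :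
    (∀ (A B : Matrix (Fin 2) (Fin 2) ℚ_[p]) (c : ℚ_[p]),
        ‖c‖ ≤ (p : ℝ) ^ (n : ℤ) → (∀ i j, ‖B i j‖ ≤ 1) →
        A = c • (1 : Matrix (Fin 2) (Fin 2) ℚ_[p]) + B →
        ‖A.det‖ ≤ 1 → ∀ i j, ‖A i j‖ ≤ 1)
    ∧ (∀ (A B : Matrix (Fin 2) (Fin 2) ℚ_[p]) (c : ℚ_[p]),
        ‖c‖ ≤ (p : ℝ) ^ (n : ℤ) → (∀ i j, ‖B i j‖ ≤ (p : ℝ) ^ (-(latExp n i j))) →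
        A = c • (1 : Matrix (Fin 2) (Fin 2) ℚ_[p]) + B →
        ‖A.det‖ ≤ 1 → ∀ i j, ‖A i j‖ ≤ (p : ℝ) ^ (-(latExp n i j))) := by
  have hp1 : (1:ℝ) ≤ (p:ℝ) := by exact_mod_cast (Fact.out : p.Prime).one_le
  have hp0 : (0:ℝ) < (p:ℝ) := by linarith
  constructor
  · intro A B c hc hB hAeq hdet i j
    have h01 : A 0 1 = B 0 1 := by
      simp [hAeq, Matrix.add_apply, Matrix.smul_apply, Matrix.one_apply]
    have h10 : A 1 0 = B 1 0 := by
      simp [hAeq, Matrix.add_apply, Matrix.smul_apply, Matrix.one_apply]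
    have hoff : ‖A 0 1 * A 1 0‖ ≤ 1 := by
      rw [norm_mul, h01, h10]
      calc ‖B 0 1‖ * ‖B 1 0‖ ≤ 1 * 1 :=
            mul_le_mul (hB 0 1) (hB 1 0) (norm_nonneg _) zero_le_one
        _ = 1 := mul_one 1
    have hc1 : ‖c‖ ≤ 1 :=
      key_scalar_le_one A B c (hB 0 0) (hB 1 1) hoff hAeq hdet
    have hAij : A i j = c • (1 : Matrix (Fin 2) (Fin 2) ℚ_[p]) i j + B i j := by
      rw [hAeq]; simp [Matrix.add_apply]
    rw [hAij]
    refine le_trans (Padic.nonarchimedean _ _) (max_le ?_ (hB i j))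
    by_cases hij : i = j
    · simp [Matrix.smul_apply, Matrix.one_apply, hij]; exact hc1
    · simp [Matrix.smul_apply, Matrix.one_apply, hij]
  · intro A B c hc hB hAeq hdet i j
    have hd00 : latExp n 0 0 = 0 := by simp [latExp]
    have hd11 : latExp n 1 1 = 0 := by simp [latExp]
    have hd01 : latExp n 0 1 = -(n:ℤ) := by simp [latExp]
    have hd10 : latExp n 1 0 = (n:ℤ) := by simp [latExp]
    have hB00 : ‖B 0 0‖ ≤ 1 := by have := hB 0 0; rwa [hd00, neg_zero, zpow_zero] at this
    have hB11 : ‖B 1 1‖ ≤ 1 := by have := hB 1 1; rwa [hd11, neg_zero, zpow_zero] at this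
    have h01 : A 0 1 = B 0 1 := by
      simp [hAeq, Matrix.add_apply, Matrix.smul_apply, Matrix.one_apply]
    have h10 : A 1 0 = B 1 0 := by
      simp [hAeq, Matrix.add_apply, Matrix.smul_apply, Matrix.one_apply]
    have hoff : ‖A 0 1 * A 1 0‖ ≤ 1 := by
      rw [norm_mul, h01, h10]
      have hb01 : ‖B 0 1‖ ≤ (p:ℝ) ^ (n:ℤ) := by
        have := hB 0 1; rwa [hd01, neg_neg] at this
      have hb10 : ‖B 1 0‖ ≤ (p:ℝ) ^ (-(n:ℤ)) := by
        have := hB 1 0; rwa [hd10] at this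
      calc ‖B 0 1‖ * ‖B 1 0‖ ≤ (p:ℝ) ^ (n:ℤ) * (p:ℝ) ^ (-(n:ℤ)) :=
            mul_le_mul hb01 hb10 (norm_nonneg _) (zpow_nonneg hp0.le _)
        _ = 1 := by rw [← zpow_add₀ (ne_of_gt hp0)]; simp
    have hc1 : ‖c‖ ≤ 1 :=
      key_scalar_le_one A B c hB00 hB11 hoff hAeq hdet
    have hAij : A i j = c • (1 : Matrix (Fin 2) (Fin 2) ℚ_[p]) i j + B i j := by
      rw [hAeq]; simp [Matrix.add_apply]
    rw [hAij]
    refine le_trans (Padic.nonarchimedean _ _) (max_le ?_ (hB i j))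
    by_cases hij : i = j
    · subst hij
      have hdi : latExp n i i = 0 := by fin_cases i <;> simp [latExp]
      rw [hdi, neg_zero, zpow_zero]
      simp only [Matrix.smul_apply, Matrix.one_apply, if_true, smul_eq_mul, mul_one]
      exact hc1
    · simp only [Matrix.smul_apply, Matrix.one_apply, hij, if_false, smul_eq_mul, mul_zero,
        norm_zero]
      exact zpow_nonneg hp0.le _
end

section
/- Let R be a complete discrete valuation ring (with 2 possibly non-invertible) and L a special R-lattice, i.e. an integral lattice of odd rank whose discriminant module L^∨/L is a cyclic R-module. Then L decomposes as an orthogonal sum L = A ⊥ Rw with A even unimodular and w ∈ L. -/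
open Submodule IsLocalRing


lemma sl_clear_denom
    {R : Type*} [CommRing R] [IsDomain R]
    {K : Type*} [Field K] [Algebra R K] [IsFractionRing R K]
    {V : Type*} [AddCommGroup V] [Module K V] [Module R V] [IsScalarTower R K V]
    (L : Submodule R V) {x : V} (hx : x ∈ Submodule.span K (L : Set V)) :
    ∃ r : R, r ≠ 0 ∧ (algebraMap R K r) • x ∈ L := by
  induction hx using Submodule.span_induction with
  | mem x h => exact ⟨1, one_ne_zero, by rw [map_one, one_smul]; exact h⟩
  | zero => exact ⟨1, one_ne_zero, by rw [smul_zero]; exact L.zero_mem⟩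
  | add x y hx hy ihx ihy =>
      obtain ⟨r, hr, hrx⟩ := ihx
      obtain ⟨s, hs, hsy⟩ := ihy
      refine ⟨r * s, mul_ne_zero hr hs, ?_⟩
      rw [smul_add, map_mul]
      have h1 : (algebraMap R K r * algebraMap R K s) • x
          = s • (algebraMap R K r • x) := by
        rw [mul_comm, mul_smul, algebraMap_smul]
      have h2 : (algebraMap R K r * algebraMap R K s) • y
          = r • (algebraMap R K s • y) := by
        rw [mul_smul, algebraMap_smul]
      rw [h1, h2]
      exact L.add_mem (L.smul_mem _ hrx) (L.smul_mem _ hsy)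
  | smul k x hx ih =>
      obtain ⟨r, hr, hrx⟩ := ih
      obtain ⟨p, q, hq, hpq⟩ := IsFractionRing.div_surjective (A := R) k
      refine ⟨q * r, mul_ne_zero (nonZeroDivisors.ne_zero hq) hr, ?_⟩
      have : (algebraMap R K (q * r)) • k • x = p • (algebraMap R K r • x) := by
        rw [map_mul, ← algebraMap_smul K p, smul_smul, smul_smul, ← hpq]
        have hq0 : algebraMap R K q ≠ 0 :=
          IsFractionRing.to_map_ne_zero_of_mem_nonZeroDivisors hq
        congr 1
        field_simp
      rw [this]
      exact L.smul_mem _ hrx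

lemma sl_unit_pow_dvd {R : Type*} [CommRing R] (ϖ : R) (u w : Rˣ) {e f : ℕ}
    (h : f ≤ e) : ((u : R) * ϖ ^ f) ∣ ((w : R) * ϖ ^ e) := by
  refine ⟨(↑u⁻¹ : R) * ↑w * ϖ ^ (e - f), ?_⟩
  have h1 : (u : R) * ϖ ^ f * ((↑u⁻¹ : R) * ↑w * ϖ ^ (e - f))
      = ((u : R) * ↑u⁻¹) * ↑w * (ϖ ^ f * ϖ ^ (e - f)) := by ring
  rw [h1, ← pow_add, Nat.add_sub_cancel' h, Units.mul_inv, one_mul]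

lemma sl_dvr_div
    {R : Type*} [CommRing R] [IsDomain R] [IsDiscreteValuationRing R]
    {K : Type*} [Field K] [Algebra R K] [IsFractionRing R K]
    {ϖ t₂ : R} (hϖ : Irreducible ϖ) {β c : K}
    (hβ : ¬ ∃ r : R, algebraMap R K t₂ * β = algebraMap R K r)
    (hc : ∃ r : R, c * β = algebraMap R K r) :
    ∃ s : R, c = algebraMap R K (ϖ * t₂ * s) := by
  have ht₂ : t₂ ≠ 0 := by
    rintro rfl; exact hβ ⟨0, by simp⟩
  have hβ0 : β ≠ 0 := by
    rintro rfl; exact hβ ⟨0, by simp⟩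
  by_cases hc0 : c = 0
  · exact ⟨0, by simp [hc0]⟩
  obtain ⟨p, q, hq, hpq⟩ := IsFractionRing.div_surjective (A := R) β
  have hq0 : q ≠ 0 := nonZeroDivisors.ne_zero hq
  have hqK : algebraMap R K q ≠ 0 :=
    IsFractionRing.to_map_ne_zero_of_mem_nonZeroDivisors hq
  have hinj : Function.Injective (algebraMap R K) := IsFractionRing.injective R K
  have hp0 : p ≠ 0 := by
    rintro rfl
    rw [map_zero, zero_div] at hpq
    exact hβ0 hpq.symm
  have hpK : algebraMap R K p ≠ 0 := by
    simpa using fun h => hp0 (hinj (by rw [h, map_zero]))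
  -- ¬ q ∣ t₂ * p
  have hndvd : ¬ (q ∣ t₂ * p) := by
    rintro ⟨m, hm⟩
    apply hβ
    refine ⟨m, ?_⟩
    rw [← hpq]
    field_simp
    rw [← map_mul, ← map_mul, hm]
  obtain ⟨a, ha⟩ := hc
  have ha0 : a ≠ 0 := by
    rintro rfl
    rw [map_zero] at ha
    exact (mul_ne_zero hc0 hβ0) ha
  -- factor everything
  obtain ⟨np, up, hp⟩ := IsDiscreteValuationRing.eq_unit_mul_pow_irreducible hp0 hϖ
  obtain ⟨nq, uq, hqf⟩ := IsDiscreteValuationRing.eq_unit_mul_pow_irreducible hq0 hϖ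
  obtain ⟨nt, ut, htf⟩ := IsDiscreteValuationRing.eq_unit_mul_pow_irreducible ht₂ hϖ
  obtain ⟨na, ua, haf⟩ := IsDiscreteValuationRing.eq_unit_mul_pow_irreducible ha0 hϖ
  have hle : 1 + nt + np ≤ na + nq := by
    by_contra hlt
    push_neg at hlt
    -- then nq ≤ nt + np, giving q ∣ t₂ * p
    have hnq : nq ≤ nt + np := by omega
    apply hndvd
    have h1 : t₂ * p = ((ut * up : Rˣ) : R) * ϖ ^ (nt + np) := by
      rw [htf, hp, pow_add]; push_cast; ring
    have h2 : q = ((uq : Rˣ) : R) * ϖ ^ nq := hqf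
    rw [h1, h2]
    exact sl_unit_pow_dvd ϖ uq (ut * up) hnq
  -- ϖ * t₂ * p ∣ a * q
  have hdvd : (ϖ * t₂ * p) ∣ (a * q) := by
    have h1 : ϖ * t₂ * p = ((ut * up : Rˣ) : R) * ϖ ^ (1 + nt + np) := by
      rw [htf, hp, pow_add, pow_add, pow_one]; push_cast; ring
    have h2 : a * q = ((ua * uq : Rˣ) : R) * ϖ ^ (na + nq) := by
      rw [haf, hqf, pow_add]; push_cast; ring
    rw [h1, h2]
    exact sl_unit_pow_dvd ϖ (ut * up) (ua * uq) hle
  obtain ⟨s, hs⟩ := hdvd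
  refine ⟨s, ?_⟩
  -- c * p = a * q  (in K), and a * q = ϖ * t₂ * p * s
  have hcp : c * algebraMap R K p = algebraMap R K a * algebraMap R K q := by
    have : c * (algebraMap R K p / algebraMap R K q) = algebraMap R K a := by
      rw [hpq]; exact ha
    field_simp at this
    linear_combination this
  have : c * algebraMap R K p = algebraMap R K (ϖ * t₂ * s) * algebraMap R K p := by
    rw [hcp, ← map_mul, hs, ← map_mul]
    ring_nf
  exact mul_right_cancel₀ hpK this

lemma sl_parity
    {R : Type*} [CommRing R] [IsDomain R] [IsDiscreteValuationRing R]
    {K : Type*} [Field K] [Algebra R K] [IsFractionRing R K]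
    {V : Type*} [AddCommGroup V] [Module K V] [Module R V] [IsScalarTower R K V]
    [FiniteDimensional K V]
    (B : LinearMap.BilinForm K V) (hsymm : ∀ x y : V, B x y = B y x) :
    ∀ n : ℕ, ∀ L : Submodule R V, L.FG →
      Module.finrank K (Submodule.span K (L : Set V)) = n → Odd n →
      (∀ x ∈ L, ∀ y ∈ L, ∃ r : R, B x y = algebraMap R K r) →
      (∀ x ∈ Submodule.span K (L : Set V),
        (∀ y ∈ L, ∃ r : R, B x y = algebraMap R K r) → x ∈ L) →
      (∀ x ∈ L, ∃ r : R, B x x = algebraMap R K r ∧ r ∈ IsLocalRing.maximalIdeal R) →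
      False := by
  intro n
  induction n using Nat.strong_induction_on with
  | _ n ih =>
  intro L hfg hdim hodd hint huni hm
  have hinj : Function.Injective (algebraMap R K) := IsFractionRing.injective R K
  obtain ⟨ϖ, hϖ⟩ := IsDiscreteValuationRing.exists_irreducible R
  have hϖm : ϖ ∈ maximalIdeal R := by
    rw [hϖ.maximalIdeal_eq]; exact Ideal.mem_span_singleton_self ϖ
  have hϖK : algebraMap R K ϖ ≠ 0 := by
    intro h
    exact hϖ.ne_zero (hinj (by rw [h, map_zero]))
  have hLne : L ≠ ⊥ := by
    intro h
    rw [h] at hdim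
    have : Module.finrank K (span K ((⊥ : Submodule R V) : Set V)) = 0 := by
      simp
    rw [this] at hdim
    rw [← hdim] at hodd
    simp at hodd
  -- Step A : find a pair with unit pairing
  have hpair : ∃ x ∈ L, ∃ y ∈ L, ∃ u : Rˣ, B x y = algebraMap R K ↑u := by
    by_contra hno
    push_neg at hno
    have hsm : ∀ x ∈ L, ∀ y ∈ L, ∃ r : R, B x y = algebraMap R K (ϖ * r) := by
      intro x hx y hy
      obtain ⟨r, hr⟩ := hint x hx y hy
      have hru : ¬ IsUnit r := by
        intro hru
        obtain ⟨u, rfl⟩ := hru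
        exact hno x hx y hy u hr
      have : r ∈ maximalIdeal R := by
        rwa [IsLocalRing.mem_maximalIdeal, mem_nonunits_iff]
      rw [hϖ.maximalIdeal_eq, Ideal.mem_span_singleton] at this
      obtain ⟨c, rfl⟩ := this
      exact ⟨c, hr⟩
    have hle : L ≤ (maximalIdeal R) • L := by
      intro x hx
      have hx1 : (algebraMap R K ϖ)⁻¹ • x ∈ L := by
        apply huni
        · exact Submodule.smul_mem _ _ (Submodule.subset_span hx)
        · intro z hz
          obtain ⟨r, hr⟩ := hsm x hx z hz
          refine ⟨r, ?_⟩
          rw [map_smul, LinearMap.smul_apply, smul_eq_mul, hr, map_mul]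
          field_simp
      have hx2 : x = ϖ • ((algebraMap R K ϖ)⁻¹ • x) := by
        rw [← algebraMap_smul K ϖ, smul_smul, mul_inv_cancel₀ hϖK, one_smul]
      rw [hx2]
      exact Submodule.smul_mem_smul hϖm hx1
    have : L = ⊥ :=
      Submodule.eq_bot_of_le_smul_of_le_jacobson_bot (maximalIdeal R) L hfg hle
        (by rw [IsLocalRing.jacobson_eq_maximalIdeal ⊥ bot_ne_top])
    exact hLne this
  obtain ⟨x, hxL, y0, hy0L, u, hu⟩ := hpair
  set y : V := (↑u⁻¹ : R) • y0 with hydef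
  have hyL : y ∈ L := Submodule.smul_mem _ _ hy0L
  have hxy : B x y = 1 := by
    rw [hydef, ← algebraMap_smul K (↑u⁻¹ : R) y0, map_smul, smul_eq_mul, hu,
      ← map_mul, Units.inv_mul, map_one]
  have hyx : B y x = 1 := by rw [hsymm]; exact hxy
  obtain ⟨aα, hα, hαm⟩ := hm x hxL
  obtain ⟨aβ, hβ, hβm⟩ := hm y hyL
  have hδu : IsUnit (aα * aβ - 1) := by
    have h1 : IsUnit (1 - aα * aβ) := by
      apply IsLocalRing.isUnit_one_sub_self_of_mem_nonunits
      exact (IsLocalRing.mem_maximalIdeal _).mp (Ideal.mul_mem_right aβ _ hαm)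
    have := h1.neg
    rwa [neg_sub] at this
  obtain ⟨w, hw⟩ := hδu
  -- smul helper lemmas
  have hBsmulK : ∀ (c : K) (v t : V), B (c • v) t = c * B v t := by
    intro c v t
    rw [map_smul, LinearMap.smul_apply, smul_eq_mul]
  have hBsmulK' : ∀ (c : K) (v t : V), B t (c • v) = c * B t v := by
    intro c v t
    rw [map_smul, smul_eq_mul]
  have hBsmulR : ∀ (c : R) (v t : V), B (c • v) t = algebraMap R K c * B v t := by
    intro c v t
    rw [← algebraMap_smul K c v, hBsmulK]
  -- projection
  have hproj : ∀ z ∈ L, ∃ z', z' ∈ L ∧ B z' x = 0 ∧ B z' y = 0 ∧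
      z - z' ∈ span K ({x, y} : Set V) := by
    intro z hz
    obtain ⟨ap, hap⟩ := hint z hz x hxL
    obtain ⟨aq, haq⟩ := hint z hz y hyL
    set c₁ : R := (ap * aβ - aq) * ↑w⁻¹ with hc₁
    set c₂ : R := (aq * aα - ap) * ↑w⁻¹ with hc₂
    have key1 : c₁ * aα + c₂ = ap := by
      have e1 : c₁ * aα + c₂ = (ap * ↑w) * ↑w⁻¹ := by
        rw [hc₁, hc₂, hw]; ring
      rw [e1, Units.mul_inv_cancel_right]
    have key2 : c₁ + c₂ * aβ = aq := by
      have e2 : c₁ + c₂ * aβ = (aq * ↑w) * ↑w⁻¹ := by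
        rw [hc₁, hc₂, hw]; ring
      rw [e2, Units.mul_inv_cancel_right]
    refine ⟨z - c₁ • x - c₂ • y, ?_, ?_, ?_, ?_⟩
    · exact Submodule.sub_mem _ (Submodule.sub_mem _ hz (Submodule.smul_mem _ _ hxL))
        (Submodule.smul_mem _ _ hyL)
    · rw [map_sub, map_sub, LinearMap.sub_apply, LinearMap.sub_apply,
        hBsmulR, hBsmulR, hap, hα, hyx, mul_one, ← map_mul, ← map_sub, ← map_sub]
      rw [show ap - c₁ * aα - c₂ = 0 by rw [← key1]; ring, map_zero]
    · rw [map_sub, map_sub, LinearMap.sub_apply, LinearMap.sub_apply,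
        hBsmulR, hBsmulR, haq, hxy, hβ, mul_one, ← map_mul, ← map_sub, ← map_sub]
      rw [show aq - c₁ - c₂ * aβ = 0 by rw [← key2]; ring, map_zero]
    · have hzz : z - (z - c₁ • x - c₂ • y) = c₁ • x + c₂ • y := by
        rw [sub_sub, sub_sub_cancel]
      rw [hzz]
      apply Submodule.add_mem
      · rw [← algebraMap_smul K c₁ x]
        exact Submodule.smul_mem _ _ (Submodule.subset_span (by simp))
      · rw [← algebraMap_smul K c₂ y]
        exact Submodule.smul_mem _ _ (Submodule.subset_span (by simp))
  -- the sublattice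
  set L' : Submodule R V := L ⊓ Submodule.restrictScalars R
      ((LinearMap.ker (B.flip x)) ⊓ (LinearMap.ker (B.flip y))) with hL'def
  have hL'mem : ∀ z, z ∈ L' ↔ z ∈ L ∧ B z x = 0 ∧ B z y = 0 := by
    intro z
    simp [hL'def, Submodule.mem_inf, LinearMap.mem_ker, LinearMap.flip_apply]
  have hL'le : L' ≤ L := inf_le_left
  have hL'fg : L'.FG := by
    haveI : IsNoetherian R ↥L := isNoetherian_of_fg_of_noetherian L hfg
    have h1 : (Submodule.comap L.subtype L').FG := IsNoetherian.noetherian _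
    have h2 := h1.map L.subtype
    rw [Submodule.map_comap_subtype, inf_eq_right.mpr hL'le] at h2
    exact h2
  set S' := span K (L' : Set V) with hS'
  set W := span K ({x, y} : Set V) with hW
  have hS'kerx : ∀ v ∈ S', B v x = 0 ∧ B v y = 0 := by
    intro v hv
    have h1 : S' ≤ (LinearMap.ker (B.flip x)) ⊓ (LinearMap.ker (B.flip y)) := by
      rw [hS']
      apply Submodule.span_le.mpr
      intro z hz
      have := (hL'mem z).mp hz
      simp [Submodule.mem_inf, LinearMap.mem_ker, LinearMap.flip_apply, this.2.1,
        this.2.2]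
    have := h1 hv
    rw [Submodule.mem_inf, LinearMap.mem_ker, LinearMap.mem_ker] at this
    simpa [LinearMap.flip_apply] using this
  have hsupS : W ⊔ S' = span K (L : Set V) := by
    apply le_antisymm
    · apply sup_le
      · apply Submodule.span_le.mpr
        intro z hz
        rcases hz with rfl | hz
        · exact Submodule.subset_span hxL
        · rcases hz with rfl
          exact Submodule.subset_span hyL
      · exact Submodule.span_mono (by exact_mod_cast hL'le)
    · apply Submodule.span_le.mpr
      intro z hz
      obtain ⟨z', hz'L, hz'x, hz'y, hzw⟩ := hproj z hz
      have h1 : z - z' ∈ W := hzw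
      have h2 : z' ∈ S' := Submodule.subset_span ((hL'mem z').mpr ⟨hz'L, hz'x, hz'y⟩)
      have : z = (z - z') + z' := by abel
      rw [this]
      exact Submodule.add_mem _ (Submodule.mem_sup_left h1) (Submodule.mem_sup_right h2)
  have hwK : algebraMap R K (aα * aβ - 1) ≠ 0 := by
    intro h
    have : (aα * aβ - 1 : R) = 0 := hinj (by rw [h, map_zero])
    rw [← hw] at this
    exact w.ne_zero this
  have hdisj : W ⊓ S' = ⊥ := by
    rw [eq_bot_iff]
    intro v hv
    rw [Submodule.mem_inf] at hv
    obtain ⟨hvW, hvS'⟩ := hv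
    obtain ⟨hvx, hvy⟩ := hS'kerx v hvS'
    obtain ⟨k₁, k₂, hk⟩ := Submodule.mem_span_pair.mp hvW
    have e1 : k₁ * algebraMap R K aα + k₂ = 0 := by
      have h := hvx
      rw [← hk, map_add, LinearMap.add_apply, hBsmulK, hBsmulK, hα, hyx,
        mul_one] at h
      exact h
    have e2 : k₁ + k₂ * algebraMap R K aβ = 0 := by
      have h := hvy
      rw [← hk, map_add, LinearMap.add_apply, hBsmulK, hBsmulK, hxy, hβ,
        mul_one] at h
      exact h
    have hk₁ : k₁ * (algebraMap R K aα * algebraMap R K aβ - 1) = 0 := by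
      linear_combination algebraMap R K aβ * e1 - e2
    have : algebraMap R K aα * algebraMap R K aβ - 1 ≠ 0 := by
      rw [← map_mul, ← map_one (algebraMap R K), ← map_sub]
      exact hwK
    have hk₁0 : k₁ = 0 := by
      rcases mul_eq_zero.mp hk₁ with h | h
      · exact h
      · exact absurd h this
    have hk₂0 : k₂ = 0 := by
      rw [hk₁0] at e1; simpa using e1
    rw [Submodule.mem_bot, ← hk, hk₁0, hk₂0, zero_smul, zero_smul, add_zero]
  have hli : LinearIndependent K ![x, y] := by
    rw [LinearIndependent.pair_iff]
    intro s t hst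
    have e1 : s * algebraMap R K aα + t = 0 := by
      have h : B (s • x + t • y) x = 0 := by rw [hst, map_zero, LinearMap.zero_apply]
      rw [map_add, LinearMap.add_apply, hBsmulK, hBsmulK, hα, hyx, mul_one] at h
      exact h
    have e2 : s + t * algebraMap R K aβ = 0 := by
      have h : B (s • x + t • y) y = 0 := by rw [hst, map_zero, LinearMap.zero_apply]
      rw [map_add, LinearMap.add_apply, hBsmulK, hBsmulK, hxy, hβ, mul_one] at h
      exact h
    have hs : s * (algebraMap R K aα * algebraMap R K aβ - 1) = 0 := by
      linear_combination algebraMap R K aβ * e1 - e2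
    have hne : algebraMap R K aα * algebraMap R K aβ - 1 ≠ 0 := by
      rw [← map_mul, ← map_one (algebraMap R K), ← map_sub]
      exact hwK
    have hs0 : s = 0 := by
      rcases mul_eq_zero.mp hs with h | h
      · exact h
      · exact absurd h hne
    refine ⟨hs0, ?_⟩
    rw [hs0] at e1; simpa using e1
  have hWfin : Module.finrank K W = 2 := by
    have hrange : Set.range ![x, y] = ({x, y} : Set V) := by
      simp [Matrix.range_cons, Matrix.range_empty]
      exact Set.pair_comm y x
    have := finrank_span_eq_card hli
    rw [hrange] at this
    rw [hW, this]
    simp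
  have hsum := Submodule.finrank_sup_add_finrank_inf_eq W S'
  rw [hsupS, hdisj, finrank_bot, hdim, hWfin, add_zero] at hsum
  obtain ⟨k, hk⟩ := hodd
  have hf'odd : Odd (Module.finrank K S') := ⟨k - 1, by omega⟩
  refine ih (Module.finrank K S') (by omega) L' hL'fg rfl hf'odd ?_ ?_ ?_
  · intro a ha b hb
    exact hint a (hL'le ha) b (hL'le hb)
  · intro v hv hvd
    have hvS : v ∈ span K (L : Set V) := by
      apply Submodule.span_mono (show (L' : Set V) ⊆ (L : Set V) from hL'le) at hv
      exact hv
    obtain ⟨hvx, hvy⟩ := hS'kerx v hv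
    have hvL : v ∈ L := by
      apply huni v hvS
      intro z hz
      obtain ⟨z', hz'L, hz'x, hz'y, hzw⟩ := hproj z hz
      have hkill : span K ({x, y} : Set V) ≤ LinearMap.ker (B v) := by
        apply Submodule.span_le.mpr
        intro t ht
        rcases ht with rfl | ht
        · simpa [LinearMap.mem_ker] using hvx
        · rcases ht with rfl
          simpa [LinearMap.mem_ker] using hvy
      have h0 : B v (z - z') = 0 := hkill hzw
      rw [map_sub] at h0
      have hvzz : B v z = B v z' := by linear_combination h0
      rw [hvzz]
      exact hvd z' ((hL'mem z').mpr ⟨hz'L, hz'x, hz'y⟩)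
    exact (hL'mem v).mpr ⟨hvL, hvx, hvy⟩
  · intro z hz
    exact hm z (hL'le hz)


/-- Let `R` be a complete discrete valuation ring (2 possibly not
invertible), `K` its fraction field, and `L` a special `R`-lattice in a regular quadratic
space `(V,Q)` over `K`: `L` is a finitely generated `R`-lattice spanning `V`, integral
(`Q(L) ⊆ R`), of odd rank, whose discriminant module `L^∨/L` is cyclic.  Then
`L = A ⊥ Rw` with `A` even unimodular and `w ∈ L`. -/
theorem special_lattice_decomposition
    {R : Type*} [CommRing R] [IsDomain R] [IsDiscreteValuationRing R]
    [IsAdicComplete (IsLocalRing.maximalIdeal R) R]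
    {K : Type*} [Field K] [Algebra R K] [IsFractionRing R K]
    {V : Type*} [AddCommGroup V] [Module K V] [Module R V] [IsScalarTower R K V]
    [FiniteDimensional K V]
    (Q : QuadraticForm K V)
    (hreg : ∀ x : V, (∀ y : V, QuadraticMap.polar Q x y = 0) → x = 0)
    (hodd : Odd (Module.finrank K V))
    (L : Submodule R V) (hfg : L.FG)
    (hfull : Submodule.span K (L : Set V) = ⊤)
    (hint : ∀ x ∈ L, ∃ r : R, Q x = algebraMap R K r)
    -- `L^∨/L` is cyclic, where `L^∨ = {x : ∀ y ∈ L, ⟨x,y⟩ ∈ R}`: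
    (hspecial : ∃ g : V,
      (∀ y ∈ L, ∃ r : R, QuadraticMap.polar Q g y = algebraMap R K r) ∧
      ∀ x : V, (∀ y ∈ L, ∃ r : R, QuadraticMap.polar Q x y = algebraMap R K r) →
        ∃ r : R, x - r • g ∈ L) :
    ∃ (A : Submodule R V) (w : V), w ∈ L
      ∧ A ⊔ Submodule.span R ({w} : Set V) = L
      ∧ Disjoint A (Submodule.span R ({w} : Set V))
      ∧ (∀ a ∈ A, QuadraticMap.polar Q a w = 0)
      -- `A` is integral (hence even, as `⟨a,a⟩ = 2Q(a)`):
      ∧ (∀ a ∈ A, ∃ r : R, Q a = algebraMap R K r)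
      -- `A` is unimodular: `A^∨ = A` inside `K·A`:
      ∧ (∀ x ∈ Submodule.span K (A : Set V),
          (∀ a ∈ A, ∃ r : R, QuadraticMap.polar Q x a = algebraMap R K r) → x ∈ A) := by
  classical
  obtain ⟨g, hg, hgen⟩ := hspecial
  set B : LinearMap.BilinForm K V := QuadraticMap.polarBilin Q with hBdef
  have hBpolar : ∀ x y : V, B x y = QuadraticMap.polar Q x y := by
    intro x y
    rw [hBdef, QuadraticMap.polarBilin_apply_apply]
  have hsymm : ∀ x y : V, B x y = B y x := by
    intro x y
    rw [hBpolar, hBpolar]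
    exact QuadraticMap.polar_comm _ x y
  have hinj : Function.Injective (algebraMap R K) := IsFractionRing.injective R K
  have hBsmulK : ∀ (c : K) (v t : V), B (c • v) t = c * B v t := by
    intro c v t
    rw [map_smul, LinearMap.smul_apply, smul_eq_mul]
  have hBsmulK' : ∀ (c : K) (v t : V), B t (c • v) = c * B t v := by
    intro c v t
    rw [map_smul, smul_eq_mul]
  have hBsmulR : ∀ (c : R) (v t : V), B (c • v) t = algebraMap R K c * B v t := by
    intro c v t
    rw [← algebraMap_smul K c v, hBsmulK]
  have hBsmulR' : ∀ (c : R) (v t : V), B t (c • v) = algebraMap R K c * B t v := by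
    intro c v t
    rw [← algebraMap_smul K c v, hBsmulK']
  have hBsubL : ∀ (a b t : V), B (a - b) t = B a t - B b t := by
    intro a b t
    rw [map_sub, LinearMap.sub_apply]
  have hint2 : ∀ x ∈ L, ∀ y ∈ L, ∃ r : R, B x y = algebraMap R K r := by
    intro x hx y hy
    obtain ⟨r1, h1⟩ := hint _ (L.add_mem hx hy)
    obtain ⟨r2, h2⟩ := hint x hx
    obtain ⟨r3, h3⟩ := hint y hy
    refine ⟨r1 - r2 - r3, ?_⟩
    rw [hBpolar, QuadraticMap.polar, h1, h2, h3, map_sub, map_sub]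
  have hg' : ∀ y ∈ L, ∃ r : R, B g y = algebraMap R K r := by
    intro y hy
    obtain ⟨r, hr⟩ := hg y hy
    exact ⟨r, by rw [hBpolar]; exact hr⟩
  by_cases hL : ∀ x : V, (∀ y ∈ L, ∃ r : R, B x y = algebraMap R K r) → x ∈ L
  · -- unimodular case
    have hw : ∃ w ∈ L, ∃ u : Rˣ, B w w = algebraMap R K ↑u := by
      by_contra hno
      push_neg at hno
      refine sl_parity B hsymm (Module.finrank K V) L hfg ?_ hodd hint2
        (fun x _ hx => hL x hx) ?_
      · rw [hfull]
        exact finrank_top K V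
      · intro x hx
        obtain ⟨r, hr⟩ := hint x hx
        have hbr : B x x = algebraMap R K (2 * r) := by
          rw [hBpolar, QuadraticMap.polar_self, hr, two_smul, two_mul, map_add]
        refine ⟨2 * r, hbr, ?_⟩
        rw [IsLocalRing.mem_maximalIdeal, mem_nonunits_iff]
        intro hu
        obtain ⟨u, hu'⟩ := hu
        exact hno x hx u (by rw [hbr, ← hu'])
    obtain ⟨w, hwL, u, hww⟩ := hw
    have huK : algebraMap R K (↑u : R) ≠ 0 := by
      intro h
      exact u.ne_zero (hinj (by rw [h, map_zero]))
    set A : Submodule R V := L ⊓ Submodule.restrictScalars R (LinearMap.ker (B.flip w))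
      with hAdef
    have hAmem : ∀ z, z ∈ A ↔ z ∈ L ∧ B z w = 0 := by
      intro z
      simp [hAdef, Submodule.mem_inf, LinearMap.mem_ker, LinearMap.flip_apply]
    have hdecomp : ∀ y ∈ L, ∃ c : R, y - c • w ∈ A := by
      intro y hy
      obtain ⟨ry, hry⟩ := hint2 w hwL y hy
      refine ⟨ry * ↑u⁻¹, (hAmem _).mpr ⟨Submodule.sub_mem _ hy (Submodule.smul_mem _ _ hwL), ?_⟩⟩
      rw [map_sub, LinearMap.sub_apply, hBsmulR, hww, ← map_mul, hsymm y w, hry]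
      rw [show ry * ↑u⁻¹ * ↑u = ry from by rw [mul_assoc, Units.inv_mul, mul_one], sub_self]
    refine ⟨A, w, hwL, ?_, ?_, ?_, ?_, ?_⟩
    · apply le_antisymm
      · apply sup_le inf_le_left
        rw [Submodule.span_le, Set.singleton_subset_iff]
        exact hwL
      · intro y hy
        obtain ⟨c, hc⟩ := hdecomp y hy
        have hyeq : y = (y - c • w) + c • w := by abel
        rw [hyeq]
        exact Submodule.add_mem _ (Submodule.mem_sup_left hc)
          (Submodule.mem_sup_right (Submodule.smul_mem _ _ (Submodule.mem_span_singleton_self w)))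
    · rw [Submodule.disjoint_def]
      intro z hzA hzw
      obtain ⟨c, rfl⟩ := Submodule.mem_span_singleton.mp hzw
      have h0 : B (c • w) w = 0 := ((hAmem _).mp hzA).2
      rw [hBsmulR, hww, ← map_mul] at h0
      have hcu : c * ↑u = 0 := hinj (by rw [h0, map_zero])
      have hc0 : c = 0 := by
        have := mul_eq_zero.mp hcu
        rcases this with h | h
        · exact h
        · exact absurd h u.ne_zero
      rw [hc0, zero_smul]
    · intro a ha
      rw [← hBpolar]
      exact ((hAmem a).mp ha).2
    · intro a ha
      exact hint a ((hAmem a).mp ha).1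
    · intro x hx hxd
      have hxker : B x w = 0 := by
        have hAker : Submodule.span K (A : Set V) ≤ LinearMap.ker (B.flip w) := by
          apply Submodule.span_le.mpr
          intro a ha
          simpa [LinearMap.mem_ker, LinearMap.flip_apply] using ((hAmem a).mp ha).2
        simpa [LinearMap.mem_ker, LinearMap.flip_apply] using hAker hx
      have hxL : x ∈ L := by
        apply hL
        intro y hy
        obtain ⟨c, hc⟩ := hdecomp y hy
        obtain ⟨r, hr⟩ := hxd (y - c • w) hc
        refine ⟨r, ?_⟩
        have hsplit : B x y = B x (y - c • w) + algebraMap R K c * B x w := by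
          rw [map_sub, hBsmulR']
          ring
        rw [hsplit, hxker, mul_zero, add_zero, hBpolar, hr]
      exact (hAmem x).mpr ⟨hxL, hxker⟩
  · -- non-unimodular case
    push_neg at hL
    obtain ⟨x₀, hx₀d, hx₀L⟩ := hL
    have hgL : g ∉ L := by
      intro hgmem
      apply hx₀L
      obtain ⟨r, hr⟩ := hgen x₀ hx₀d
      have : x₀ = (x₀ - r • g) + r • g := by abel
      rw [this]
      exact Submodule.add_mem _ hr (Submodule.smul_mem _ _ hgmem)
    obtain ⟨ϖ, hϖ⟩ := IsDiscreteValuationRing.exists_irreducible R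
    have hϖ0 : ϖ ≠ 0 := hϖ.ne_zero
    have hϖK : algebraMap R K ϖ ≠ 0 := fun h => hϖ0 (hinj (by rw [h, map_zero]))
    -- the ideal of denominators of g
    set I : Ideal R := Submodule.comap (LinearMap.toSpanSingleton R V g) L with hIdef
    have hImem : ∀ r : R, r ∈ I ↔ r • g ∈ L := fun r => Iff.rfl
    have hgV : g ∈ Submodule.span K (L : Set V) := by rw [hfull]; trivial
    have hIne : I ≠ ⊥ := by
      obtain ⟨r, hr0, hrg⟩ := sl_clear_denom L hgV
      intro h
      have hrI : r ∈ I := by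
        rw [hImem, ← algebraMap_smul K r g]
        exact hrg
      rw [h, Submodule.mem_bot] at hrI
      exact hr0 hrI
    obtain ⟨t, ht⟩ := (IsPrincipalIdealRing.principal I).principal
    rw [Ideal.submodule_span_eq] at ht
    have htI : t ∈ I := by rw [ht]; exact Ideal.mem_span_singleton_self t
    have htg_mem : t • g ∈ L := (hImem t).mp htI
    have ht0 : t ≠ 0 := by
      rintro rfl
      apply hIne
      rw [ht]
      exact Ideal.span_singleton_eq_bot.mpr rfl
    have htnu : ¬ IsUnit t := by
      intro hu
      apply hgL
      have h1 : (1 : R) ∈ I := by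
        rw [ht, Ideal.span_singleton_eq_top.mpr hu]
        trivial
      have := (hImem 1).mp h1
      rwa [one_smul] at this
    obtain ⟨t₂, ht₂⟩ : ϖ ∣ t := by
      have h1 : t ∈ maximalIdeal R := by
        rw [IsLocalRing.mem_maximalIdeal, mem_nonunits_iff]
        exact htnu
      rwa [hϖ.maximalIdeal_eq, Ideal.mem_span_singleton] at h1
    have ht₂0 : t₂ ≠ 0 := by
      rintro rfl
      rw [mul_zero] at ht₂
      exact ht0 ht₂
    -- free basis of L
    haveI : Module.Finite R ↥L := Module.Finite.iff_fg.mpr hfg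
    haveI : NoZeroSMulDivisors R ↥L := by
      constructor
      intro r x h
      by_cases hr : r = 0
      · exact Or.inl hr
      · refine Or.inr (Subtype.ext ?_)
        have h1 : r • (x : V) = 0 := by
          have := congrArg (Subtype.val) h
          simpa using this
        rw [← algebraMap_smul K r (x : V)] at h1
        rcases smul_eq_zero.mp h1 with h' | h'
        · exact absurd (hinj (by rw [h', map_zero])) hr
        · exact h'
    set eL := Module.Free.chooseBasis R ↥L with heL
    set ev : Module.Free.ChooseBasisIndex R ↥L → V := fun i => ((eL i : ↥L) : V) with hev
    have hLspanR : Submodule.span R (Set.range ev) = L := by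
      have h1 := eL.span_eq
      have h2 : Submodule.map L.subtype (Submodule.span R (Set.range ⇑eL)) = L := by
        rw [h1, Submodule.map_subtype_top]
      rw [Submodule.map_span, ← Set.range_comp] at h2
      exact h2
    have hevL : ∀ i, ev i ∈ L := fun i => (eL i).2
    have hliK : LinearIndependent K ev := by
      have h1 : LinearIndependent R ev := eL.linearIndependent.map' L.subtype (Submodule.ker_subtype L)
      exact (LinearIndependent.iff_fractionRing R K).mp h1
    have hspanKev : ⊤ ≤ Submodule.span K (Set.range ev) := by
      rw [← hfull]
      apply Submodule.span_le.mpr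
      intro z hz
      rw [← hLspanR] at hz
      have hle : Submodule.span R (Set.range ev) ≤
          Submodule.restrictScalars R (Submodule.span K (Set.range ev)) :=
        Submodule.span_le.mpr (fun s hs => Submodule.subset_span hs)
      exact hle hz
    set bV : Module.Basis (Module.Free.ChooseBasisIndex R ↥L) K V := Module.Basis.mk hliK hspanKev with hbVdef
    have hbV : ∀ i, bV i = ev i := fun i => Module.Basis.mk_apply _ _ _
    have hB_nd : B.Nondegenerate := by
      refine (LinearMap.IsRefl.nondegenerate_iff_separatingLeft (fun a b h => by rw [hsymm]; exact h)).mpr ?_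
      intro v hv
      exact hreg v (fun y => by rw [← hBpolar]; exact hv y)
    set eS := B.dualBasis hB_nd bV with heSdef
    have heS : ∀ i j, B (eS i) (bV j) = if j = i then 1 else 0 := fun i j =>
      LinearMap.BilinForm.apply_dualBasis_left hB_nd bV i j
    have hrepr : ∀ (v : V) (i), B (eS i) v = bV.repr v i := by
      intro v i
      conv_lhs => rw [← Module.Basis.sum_repr bV v]
      rw [map_sum]
      rw [Finset.sum_congr rfl (fun j _ => by rw [hBsmulK', heS])]
      simp
    have heSd : ∀ i, ∀ z ∈ L, ∃ r : R, B (eS i) z = algebraMap R K r := by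
      intro i z hz
      rw [← hLspanR] at hz
      obtain ⟨c, hc⟩ := (mem_span_range_iff_exists_fun R).mp hz
      refine ⟨c i, ?_⟩
      rw [← hc, map_sum]
      rw [Finset.sum_congr rfl (fun j _ => by
        rw [hBsmulR', show ev j = bV j from (hbV j).symm, heS])]
      simp [Finset.sum_ite_eq]
    have hdecS : ∀ i, ∃ s : R, eS i - s • g ∈ L := by
      intro i
      apply hgen
      intro z hz
      obtain ⟨r, hr⟩ := heSd i z hz
      exact ⟨r, by rw [← hBpolar]; exact hr⟩
    choose sc lmem using hdecS
    -- the key valuation fact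
    have htg : ¬ ∃ r : R, algebraMap R K t₂ * B g g = algebraMap R K r := by
      rintro ⟨r₀, hr₀⟩
      set y0 : V := (algebraMap R K t₂) • g with hy0
      have hcoef : ∀ i, ∃ c : R, bV.repr y0 i = algebraMap R K c := by
        intro i
        rw [← hrepr]
        obtain ⟨rl, hrl⟩ := hg' (eS i - sc i • g) (lmem i)
        refine ⟨t₂ * rl + sc i * r₀, ?_⟩
        have h1 : B (eS i) y0 = algebraMap R K t₂ * B (eS i) g := hBsmulK' _ _ _
        have h2 : B g (eS i) = algebraMap R K rl + algebraMap R K (sc i) * B g g := by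
          have : eS i = (eS i - sc i • g) + sc i • g := by abel
          rw [this, map_add, hrl, hBsmulR']
        rw [h1, hsymm (eS i) g, h2, map_add, map_mul, map_mul, ← hr₀]
        ring
      have hy0L : y0 ∈ L := by
        choose c hc using hcoef
        have hsum : y0 = ∑ i, c i • ev i := by
          conv_lhs => rw [← Module.Basis.sum_repr bV y0]
          refine Finset.sum_congr rfl ?_
          intro i _
          rw [hc i, hbV i, algebraMap_smul]
        rw [hsum]
        exact Submodule.sum_mem _ (fun i _ => Submodule.smul_mem _ _ (hevL i))
      have ht₂I : t₂ ∈ I := by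
        rw [hImem, ← algebraMap_smul K t₂ g]
        exact hy0L
      rw [ht, Ideal.mem_span_singleton] at ht₂I
      obtain ⟨m, hm⟩ := ht₂I
      rw [ht₂] at hm
      have hz : t₂ * (1 - ϖ * m) = 0 := by linear_combination hm
      rcases mul_eq_zero.mp hz with h | h
      · exact ht₂0 h
      · apply hϖ.not_isUnit
        have h1 : ϖ * m = 1 := by linear_combination -h
        exact IsUnit.of_mul_eq_one _ h1
    have hBgg0 : B g g ≠ 0 := by
      intro h
      exact htg ⟨0, by rw [h, mul_zero, map_zero]⟩
    have hv : ∃ v ∈ L, B g v = 1 := by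
      have huy : ∃ y ∈ L, ∃ u : Rˣ, B g y = algebraMap R K ↑u := by
        by_contra hno
        push_neg at hno
        have hgm : ∀ y ∈ L, ∃ r : R, B g y = algebraMap R K (ϖ * r) := by
          intro y hy
          obtain ⟨r, hr⟩ := hg' y hy
          have hru : ¬ IsUnit r := by
            intro hru
            obtain ⟨uu, rfl⟩ := hru
            exact hno y hy uu hr
          have hrm : r ∈ maximalIdeal R := by
            rw [IsLocalRing.mem_maximalIdeal, mem_nonunits_iff]
            exact hru
          rw [hϖ.maximalIdeal_eq, Ideal.mem_span_singleton] at hrm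
          obtain ⟨cc, rfl⟩ := hrm
          exact ⟨cc, hr⟩
        obtain ⟨r, hrg⟩ := hgen ((algebraMap R K ϖ)⁻¹ • g) (by
          intro y hy
          obtain ⟨rr, hrr⟩ := hgm y hy
          refine ⟨rr, ?_⟩
          rw [← hBpolar, hBsmulK, hrr, map_mul]
          field_simp)
        apply hgL
        set l : V := (algebraMap R K ϖ)⁻¹ • g - r • g with hldef
        have hlL : l ∈ L := hrg
        have hunit : IsUnit (1 - ϖ * r) :=
          IsLocalRing.isUnit_one_sub_self_of_mem_nonunits _
            ((IsLocalRing.mem_maximalIdeal _).mp (Ideal.mul_mem_right r _ (by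
              rw [hϖ.maximalIdeal_eq]
              exact Ideal.mem_span_singleton_self ϖ)))
        obtain ⟨uu, huu⟩ := hunit
        have h1 : (algebraMap R K ϖ) • l = (algebraMap R K (1 - ϖ * r)) • g := by
          rw [hldef, smul_sub, smul_smul, mul_inv_cancel₀ hϖK, one_smul,
            ← algebraMap_smul K r g, smul_smul, ← map_mul, map_sub, map_one,
            sub_smul, one_smul]
        have h2 : (↑uu⁻¹ : R) • (ϖ • l) = g := by
          rw [← algebraMap_smul K (↑uu⁻¹ : R) (ϖ • l), ← algebraMap_smul K ϖ l, h1,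
            smul_smul, ← map_mul, ← huu, Units.inv_mul, map_one, one_smul]
        rw [← h2]
        exact Submodule.smul_mem _ _ (Submodule.smul_mem _ _ hlL)
      obtain ⟨y, hyL, u, hy⟩ := huy
      refine ⟨(↑u⁻¹ : R) • y, Submodule.smul_mem _ _ hyL, ?_⟩
      rw [hBsmulR', hy, ← map_mul, Units.inv_mul, map_one]
    obtain ⟨v, hvL, hgv⟩ := hv
    set A : Submodule R V := L ⊓ Submodule.restrictScalars R (LinearMap.ker (B g)) with hAdef
    have hAmem : ∀ z, z ∈ A ↔ z ∈ L ∧ B g z = 0 := by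
      intro z
      simp [hAdef, Submodule.mem_inf, LinearMap.mem_ker]
    have hdecomp : ∀ y ∈ L, ∃ ry : R, B g y = algebraMap R K ry ∧ y - ry • v ∈ A := by
      intro y hy
      obtain ⟨ry, hry⟩ := hg' y hy
      refine ⟨ry, hry, (hAmem _).mpr ⟨Submodule.sub_mem _ hy (Submodule.smul_mem _ _ hvL), ?_⟩⟩
      rw [map_sub, hBsmulR', hgv, mul_one, hry, sub_self]
    have hspanA : Submodule.span K (A : Set V) = LinearMap.ker (B g) := by
      apply le_antisymm
      · exact Submodule.span_le.mpr (fun a ha => LinearMap.mem_ker.mpr ((hAmem a).mp ha).2)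
      · intro z hz
        obtain ⟨r, hr0, hrz⟩ := sl_clear_denom L (x := z) (by rw [hfull]; trivial)
        have hrK : algebraMap R K r ≠ 0 := fun h => hr0 (hinj (by rw [h, map_zero]))
        have hrzA : algebraMap R K r • z ∈ A := (hAmem _).mpr ⟨hrz, by
          rw [hBsmulK', LinearMap.mem_ker.mp hz, mul_zero]⟩
        have hzeq : z = (algebraMap R K r)⁻¹ • (algebraMap R K r • z) := by
          rw [smul_smul, inv_mul_cancel₀ hrK, one_smul]
        rw [hzeq]
        exact Submodule.smul_mem _ _ (Submodule.subset_span hrzA)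
    have huniA : ∀ x ∈ Submodule.span K (A : Set V),
        (∀ a ∈ A, ∃ r : R, B x a = algebraMap R K r) → x ∈ A := by
      intro x hx hxd
      have hxker : B g x = 0 := by
        rw [hspanA] at hx
        exact LinearMap.mem_ker.mp hx
      set c : K := B x v with hcdef
      set z : V := x - c • g with hzdef
      have hzdual : ∀ y ∈ L, ∃ r : R, B z y = algebraMap R K r := by
        intro y hy
        obtain ⟨ry, hry, haA⟩ := hdecomp y hy
        obtain ⟨r, hr⟩ := hxd (y - ry • v) haA
        refine ⟨r, ?_⟩
        have hBzv : B z v = 0 := by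
          rw [hzdef, hBsubL, hBsmulK, hgv, mul_one, hcdef, sub_self]
        have hBga : B g (y - ry • v) = 0 := ((hAmem _).mp haA).2
        have hBza : B z (y - ry • v) = B x (y - ry • v) := by
          rw [hzdef, hBsubL, hBsmulK, hBga, mul_zero, sub_zero]
        have hyeq : y = (y - ry • v) + ry • v := by abel
        calc B z y = B z (y - ry • v) + algebraMap R K ry * B z v := by
              conv_lhs => rw [hyeq]
              rw [map_add, hBsmulR']
          _ = algebraMap R K r := by rw [hBzv, mul_zero, add_zero, hBza, hr]
      obtain ⟨s₁, hs₁⟩ := hgen z (fun y hy => by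
        obtain ⟨r, hr⟩ := hzdual y hy
        exact ⟨r, by rw [← hBpolar]; exact hr⟩)
      obtain ⟨rl, hrl⟩ := hg' (z - s₁ • g) hs₁
      have hxeq : x = (z - s₁ • g) + (algebraMap R K s₁ + c) • g := by
        rw [hzdef, ← algebraMap_smul K s₁ g, add_smul]
        abel
      have hkey : (algebraMap R K s₁ + c) * B g g = algebraMap R K (-rl) := by
        have h0 : B g x = 0 := hxker
        rw [hxeq, map_add, hrl, hBsmulK'] at h0
        rw [map_neg]
        linear_combination h0
      obtain ⟨s₂, hs₂⟩ := sl_dvr_div hϖ htg ⟨-rl, hkey⟩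
      have hxL2 : x ∈ L := by
        rw [hxeq, hs₂, algebraMap_smul]
        refine Submodule.add_mem _ hs₁ ?_
        have hsm : (ϖ * t₂ * s₂) • g = s₂ • (t • g) := by
          rw [smul_smul, ← ht₂, mul_comm]
        rw [hsm]
        exact Submodule.smul_mem _ _ htg_mem
      exact (hAmem x).mpr ⟨hxL2, hxker⟩
    -- orthogonal projection to build w
    set Br : LinearMap.BilinForm K ↥(LinearMap.ker (B g)) :=
      LinearMap.compl₁₂ B (LinearMap.ker (B g)).subtype (LinearMap.ker (B g)).subtype
      with hBrdef
    have hBrapp : ∀ (a b : ↥(LinearMap.ker (B g))), Br a b = B ↑a ↑b := by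
      intro a b
      rw [hBrdef, LinearMap.compl₁₂_apply]
      rfl
    have hBr_nd : Br.Nondegenerate := by
      refine (LinearMap.IsRefl.nondegenerate_iff_separatingLeft
        (fun a b h => by rw [hBrapp] at h ⊢; rw [hsymm]; exact h)).mpr ?_
      rintro ⟨z, hzH⟩ hz0
      refine Subtype.ext (hreg z (fun y => ?_))
      rw [← hBpolar]
      set kc : K := B g y / B g g with hkc
      have hyH : y - kc • g ∈ LinearMap.ker (B g) := by
        rw [LinearMap.mem_ker, map_sub, hBsmulK', hkc]
        field_simp
        simp
      have h1 : B z (y - kc • g) = 0 := by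
        have h2 := hz0 ⟨y - kc • g, hyH⟩
        rw [hBrapp] at h2
        exact h2
      have h2 : B z g = 0 := by
        rw [hsymm]
        exact LinearMap.mem_ker.mp hzH
      rw [map_sub, hBsmulK', h2, mul_zero, sub_zero] at h1
      exact h1
    set fz : Module.Dual K ↥(LinearMap.ker (B g)) :=
      (B v).domRestrict (LinearMap.ker (B g)) with hfzdef
    set h0 : ↥(LinearMap.ker (B g)) := (Br.toDual hBr_nd).symm fz with hh0def
    have hh0p : ∀ a : ↥(LinearMap.ker (B g)), B ↑h0 ↑a = B v ↑a := by
      intro a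
      have h1 := LinearMap.BilinForm.apply_toDual_symm_apply (B := Br) (hB := hBr_nd) fz a
      rw [hBrapp] at h1
      rw [h1, hfzdef, LinearMap.domRestrict_apply]
    have hh0A : (↑h0 : V) ∈ A := by
      apply huniA
      · rw [hspanA]
        exact h0.2
      · intro a ha
        have haH : a ∈ LinearMap.ker (B g) := LinearMap.mem_ker.mpr ((hAmem a).mp ha).2
        rw [hh0p ⟨a, haH⟩]
        exact hint2 v hvL a ((hAmem a).mp ha).1
    set w : V := v - ↑h0 with hwdef
    have hwL : w ∈ L := Submodule.sub_mem _ hvL ((hAmem _).mp hh0A).1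
    have hgw : B g w = 1 := by
      rw [hwdef, map_sub, hgv]
      have h1 : B g ↑h0 = 0 := LinearMap.mem_ker.mp h0.2
      rw [h1, sub_zero]
    have hAw : ∀ a ∈ A, B a w = 0 := by
      intro a ha
      have haH : a ∈ LinearMap.ker (B g) := LinearMap.mem_ker.mpr ((hAmem a).mp ha).2
      rw [hwdef, map_sub, hsymm a v, hsymm a ↑h0, hh0p ⟨a, haH⟩, sub_self]
    have hdecw : ∀ y ∈ L, ∃ ry : R, B g y = algebraMap R K ry ∧ y - ry • w ∈ A := by
      intro y hy
      obtain ⟨ry, hry⟩ := hg' y hy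
      refine ⟨ry, hry, (hAmem _).mpr ⟨Submodule.sub_mem _ hy (Submodule.smul_mem _ _ hwL), ?_⟩⟩
      rw [map_sub, hBsmulR', hgw, mul_one, hry, sub_self]
    refine ⟨A, w, hwL, ?_, ?_, ?_, ?_, ?_⟩
    · apply le_antisymm
      · apply sup_le inf_le_left
        rw [Submodule.span_le, Set.singleton_subset_iff]
        exact hwL
      · intro y hy
        obtain ⟨ry, _, hyA⟩ := hdecw y hy
        have hyeq : y = (y - ry • w) + ry • w := by abel
        rw [hyeq]
        exact Submodule.add_mem _ (Submodule.mem_sup_left hyA)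
          (Submodule.mem_sup_right (Submodule.smul_mem _ _ (Submodule.mem_span_singleton_self w)))
    · rw [Submodule.disjoint_def]
      intro z' hzA hzw
      obtain ⟨cz, rfl⟩ := Submodule.mem_span_singleton.mp hzw
      have h0' : B g (cz • w) = 0 := ((hAmem _).mp hzA).2
      rw [hBsmulR', hgw, mul_one] at h0'
      rw [show cz = 0 from hinj (by rw [h0', map_zero]), zero_smul]
    · intro a ha
      rw [← hBpolar]
      exact hAw a ha
    · intro a ha
      exact hint a ((hAmem a).mp ha).1
    · intro x hx hxd
      apply huniA x hx
      intro a ha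
      obtain ⟨r, hr⟩ := hxd a ha
      exact ⟨r, by rw [hBpolar]; exact hr⟩
end
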